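/- arXiv:1001.4541 — 5 statements merged into one kernel-verified Lean document; each statement's English description precedes it below -/
import Mathlib

section
/- Let J : ℝ × ℝ × ℝ → M₂(ℝ) be the map J(θ₁, t, θ₂) = k_{θ₁} · a_t · k_{θ₂}. Then J is differentiable, and for every (θ₁, t, θ₂) and every tangent direction (ξ₁, η, ξ₂) ∈ ℝ³, the Fréchet derivative of J at (θ₁, t, θ₂) applied to (ξ₁, η, ξ₂) equals J(θ₁, t, θ₂) · ( k_{θ₂}⁻¹ · ( ξ₁·((cosh t)·Y − (sinh t)·V) + (η/2)·h ) · k_{θ₂} + ξ₂·Y ). -/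
attribute [local instance] Matrix.normedAddCommGroup Matrix.normedSpace

noncomputable def kmat (θ : ℝ) : Matrix (Fin 2) (Fin 2) ℝ :=
  !![Real.cos θ, Real.sin θ; -Real.sin θ, Real.cos θ]

noncomputable def amat (t : ℝ) : Matrix (Fin 2) (Fin 2) ℝ :=
  !![Real.exp (t/2), 0; 0, Real.exp (-t/2)]

def hmat : Matrix (Fin 2) (Fin 2) ℝ := !![1, 0; 0, -1]
def emat : Matrix (Fin 2) (Fin 2) ℝ := !![0, 1; 0, 0]
def fmat : Matrix (Fin 2) (Fin 2) ℝ := !![0, 0; 1, 0]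

def Vmat : Matrix (Fin 2) (Fin 2) ℝ := emat + fmat
def Ymat : Matrix (Fin 2) (Fin 2) ℝ := emat - fmat

/-- The Cartan decomposition map `J(θ₁, t, θ₂) = k_{θ₁} a_t k_{θ₂}`. -/
noncomputable def Jmap : ℝ × ℝ × ℝ → Matrix (Fin 2) (Fin 2) ℝ :=
  fun p => kmat p.1 * amat p.2.1 * kmat p.2.2

abbrev M2 := Matrix (Fin 2) (Fin 2) ℝ

noncomputable def mulL : M2 →L[ℝ] M2 →L[ℝ] M2 :=
  LinearMap.toContinuousLinearMap
    { toFun := fun A => LinearMap.toContinuousLinearMap (LinearMap.mul ℝ M2 A)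
      map_add' := by intros; ext; simp [add_mul]
      map_smul' := by intros; ext; simp }

@[simp] lemma mulL_apply (A B : M2) : mulL A B = A * B := rfl

lemma hasDerivAt_matrix {f : ℝ → M2} {f' : M2} {x : ℝ}
    (h : ∀ i j, HasDerivAt (fun x => f x i j) (f' i j) x) : HasDerivAt f f' x := by
  exact hasDerivAt_pi.2 fun i => hasDerivAt_pi.2 (h i)

lemma L1 (θ : ℝ) : kmat θ * Ymat = !![-Real.sin θ, Real.cos θ; -Real.cos θ, -Real.sin θ] := by
  ext i j
  fin_cases i <;> fin_cases j <;>
    simp [kmat, Ymat, emat, fmat, Matrix.mul_apply, Fin.sum_univ_two]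

lemma hk (θ : ℝ) : HasDerivAt kmat (kmat θ * Ymat) θ := by
  rw [L1]
  apply hasDerivAt_matrix
  intro i j
  fin_cases i <;> fin_cases j <;> simp [kmat]
  · exact Real.hasDerivAt_cos θ
  · exact Real.hasDerivAt_sin θ
  · exact (Real.hasDerivAt_sin θ).neg
  · exact Real.hasDerivAt_cos θ

lemma L2 (t : ℝ) : amat t * hmat = !![Real.exp (t/2), 0; 0, -Real.exp (-t/2)] := by
  ext i j
  fin_cases i <;> fin_cases j <;>
    simp [amat, hmat, Matrix.mul_apply, Fin.sum_univ_two]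

lemma ha (t : ℝ) : HasDerivAt amat ((1/2 : ℝ) • (amat t * hmat)) t := by
  rw [L2]
  apply hasDerivAt_matrix
  intro i j
  fin_cases i <;> fin_cases j <;> simp [amat, Matrix.smul_apply]
  · have h := (Real.hasDerivAt_exp (t/2)).comp t ((hasDerivAt_id t).div_const 2)
    exact h.congr_deriv (by ring)
  · exact hasDerivAt_const t 0
  · exact hasDerivAt_const t 0
  · have h := (Real.hasDerivAt_exp (-t/2)).comp t (((hasDerivAt_id t).neg).div_const 2)
    exact h.congr_deriv (by ring)

lemma L3 (t : ℝ) :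
    amat t * (Real.cosh t • Ymat - Real.sinh t • Vmat) = Ymat * amat t := by
  have e1 : Real.exp (t/2) * Real.exp (-t) = Real.exp (-t/2) := by
    rw [← Real.exp_add]; congr 1; ring
  have e2 : Real.exp (-t/2) * Real.exp t = Real.exp (t/2) := by
    rw [← Real.exp_add]; congr 1; ring
  ext i j
  fin_cases i <;> fin_cases j <;>
    simp [amat, Ymat, Vmat, emat, fmat, Matrix.mul_apply, Fin.sum_univ_two]
  · exact e1
  · rw [← e2, ← Real.cosh_add_sinh t]; ring

lemma L4 (θ : ℝ) : kmat θ * (kmat θ)⁻¹ = 1 := by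
  have h : kmat θ * !![Real.cos θ, -Real.sin θ; Real.sin θ, Real.cos θ] = 1 := by
    ext i j
    fin_cases i <;> fin_cases j <;>
      simp [kmat, Matrix.mul_apply, Fin.sum_univ_two, Matrix.one_apply] <;>
      nlinarith [Real.sin_sq_add_cos_sq θ]
  rw [Matrix.inv_eq_right_inv h, h]

noncomputable def D1 (p : ℝ × ℝ × ℝ) : (ℝ × ℝ × ℝ) →L[ℝ] M2 :=
  (ContinuousLinearMap.smulRight (1 : ℝ →L[ℝ] ℝ) (kmat p.1 * Ymat)).comp
    (ContinuousLinearMap.fst ℝ ℝ (ℝ × ℝ))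
noncomputable def D2 (p : ℝ × ℝ × ℝ) : (ℝ × ℝ × ℝ) →L[ℝ] M2 :=
  (ContinuousLinearMap.smulRight (1 : ℝ →L[ℝ] ℝ) ((1/2 : ℝ) • (amat p.2.1 * hmat))).comp
    ((ContinuousLinearMap.fst ℝ ℝ ℝ).comp (ContinuousLinearMap.snd ℝ ℝ (ℝ × ℝ)))
noncomputable def D3 (p : ℝ × ℝ × ℝ) : (ℝ × ℝ × ℝ) →L[ℝ] M2 :=
  (ContinuousLinearMap.smulRight (1 : ℝ →L[ℝ] ℝ) (kmat p.2.2 * Ymat)).comp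
    ((ContinuousLinearMap.snd ℝ ℝ ℝ).comp (ContinuousLinearMap.snd ℝ ℝ (ℝ × ℝ)))
noncomputable def DG (p : ℝ × ℝ × ℝ) : (ℝ × ℝ × ℝ) →L[ℝ] M2 :=
  (mulL.isBoundedBilinearMap.deriv (kmat p.1, amat p.2.1)).comp ((D1 p).prod (D2 p))
noncomputable def DJ (p : ℝ × ℝ × ℝ) : (ℝ × ℝ × ℝ) →L[ℝ] M2 :=
  (mulL.isBoundedBilinearMap.deriv (kmat p.1 * amat p.2.1, kmat p.2.2)).comp
    ((DG p).prod (D3 p))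

lemma key (p : ℝ × ℝ × ℝ) : HasFDerivAt Jmap (DJ p) p := by
  have h1 : HasFDerivAt (fun q : ℝ × ℝ × ℝ => kmat q.1) (D1 p) p :=
    (hk p.1).hasFDerivAt.comp p hasFDerivAt_fst
  have h2 : HasFDerivAt (fun q : ℝ × ℝ × ℝ => amat q.2.1) (D2 p) p :=
    (ha p.2.1).hasFDerivAt.comp (f := fun q : ℝ × ℝ × ℝ => q.2.1) p (hasFDerivAt_fst.comp p (hasFDerivAt_snd (p := p)))
  have h3 : HasFDerivAt (fun q : ℝ × ℝ × ℝ => kmat q.2.2) (D3 p) p :=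
    (hk p.2.2).hasFDerivAt.comp (f := fun q : ℝ × ℝ × ℝ => q.2.2) p (hasFDerivAt_snd.comp p (hasFDerivAt_snd (p := p)))
  have hG : HasFDerivAt (fun q : ℝ × ℝ × ℝ => kmat q.1 * amat q.2.1) (DG p) p :=
    by have := ((mulL.isBoundedBilinearMap.hasFDerivAt (kmat p.1, amat p.2.1)).comp p (HasFDerivAt.prodMk h1 h2)); exact this
  exact ((mulL.isBoundedBilinearMap.hasFDerivAt
    (kmat p.1 * amat p.2.1, kmat p.2.2)).comp p (HasFDerivAt.prodMk hG h3))

lemma DJ_apply (θ₁ t θ₂ ξ₁ η ξ₂ : ℝ) :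
    DJ (θ₁, t, θ₂) (ξ₁, η, ξ₂) =
      ξ₁ • (kmat θ₁ * Ymat * amat t * kmat θ₂) +
      (η/2) • (kmat θ₁ * (amat t * hmat) * kmat θ₂) +
      ξ₂ • (kmat θ₁ * amat t * (kmat θ₂ * Ymat)) := by
  show kmat θ₁ * amat t * (ξ₂ • (kmat θ₂ * Ymat)) +
    (kmat θ₁ * (η • ((1/2 : ℝ) • (amat t * hmat))) + (ξ₁ • (kmat θ₁ * Ymat)) * amat t) * kmat θ₂ = _
  simp [DJ, DG, D1, D2, D3, IsBoundedBilinearMap.deriv_apply, Matrix.mul_smul,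
    Matrix.smul_mul, mul_assoc, smul_smul]
  rw [add_mul]
  simp only [Matrix.smul_mul, mul_assoc]
  rw [div_eq_mul_inv]
  abel

lemma aux (k1 a k2 X W : M2) (h4 : k2 * k2⁻¹ = 1) (ξ₂ : ℝ) :
    (k1 * a * k2) * (k2⁻¹ * X * k2 + ξ₂ • W) =
      k1 * (a * X) * k2 + ξ₂ • (k1 * a * (k2 * W)) := by
  rw [mul_add, mul_assoc (k1 * a) k2, ← mul_assoc k2 (k2⁻¹ * X) k2,
    ← mul_assoc k2 k2⁻¹ X, h4, one_mul, Matrix.mul_smul, mul_assoc (k1 * a) k2 W]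
  noncomm_ring

theorem cartan_derivative :
    Differentiable ℝ Jmap ∧
    ∀ θ₁ t θ₂ ξ₁ η ξ₂ : ℝ,
      fderiv ℝ Jmap (θ₁, t, θ₂) (ξ₁, η, ξ₂) =
        Jmap (θ₁, t, θ₂) *
          ((kmat θ₂)⁻¹ *
              (ξ₁ • (Real.cosh t • Ymat - Real.sinh t • Vmat) + (η/2) • hmat) * kmat θ₂ +
            ξ₂ • Ymat) := by
  constructor
  · exact fun p => (key p).differentiableAt
  · intro θ₁ t θ₂ ξ₁ η ξ₂
    rw [(key (θ₁, t, θ₂)).fderiv, DJ_apply]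
    rw [show Jmap (θ₁, t, θ₂) = kmat θ₁ * amat t * kmat θ₂ from rfl]
    rw [aux _ _ _ _ _ (L4 θ₂)]
    have hX : amat t * (ξ₁ • (Real.cosh t • Ymat - Real.sinh t • Vmat) + (η/2) • hmat)
        = ξ₁ • (Ymat * amat t) + (η/2) • (amat t * hmat) := by
      rw [mul_add, Matrix.mul_smul, Matrix.mul_smul, L3]
    rw [hX, mul_add, add_mul, Matrix.mul_smul, Matrix.mul_smul,
      Matrix.smul_mul, Matrix.smul_mul]
    simp only [mul_assoc]
end

section
/- Let s ∈ ℝ and k ∈ ℤ, and let f : ℝ → ℂ be a differentiable function satisfying the differential equation 2·s·x·f(x) + (1 + x²)·f'(x) = 2·i·k·f(x) for all x ∈ ℝ. Then there exists a constant c ∈ ℂ such that f(x) = c·(x − i)^{k − s}·(x + i)^{−k − s} for all x ∈ ℝ, where z^w denotes the principal-branch complex power. -/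
open Complex

theorem weight_vector_ode_solution (s : ℝ) (k : ℤ) (f : ℝ → ℂ)
    (hf : Differentiable ℝ f)
    (hode : ∀ x : ℝ, 2 * (s : ℂ) * (x : ℂ) * f x + (1 + (x : ℂ)^2) * deriv f x
      = 2 * Complex.I * (k : ℂ) * f x) :
    ∃ c : ℂ, ∀ x : ℝ,
      f x = c * ((x : ℂ) - Complex.I) ^ ((k : ℂ) - (s : ℂ)) *
        ((x : ℂ) + Complex.I) ^ (-(k : ℂ) - (s : ℂ)) := by
  set g : ℝ → ℂ := fun x => f x * ((x : ℂ) - Complex.I) ^ ((s : ℂ) - k) *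
      ((x : ℂ) + Complex.I) ^ ((s : ℂ) + k) with hg
  have ha : ∀ x : ℝ, ((x : ℂ) - Complex.I) ≠ 0 := by
    intro x h
    have := congrArg Complex.im h
    simp at this
  have hb : ∀ x : ℝ, ((x : ℂ) + Complex.I) ≠ 0 := by
    intro x h
    have := congrArg Complex.im h
    simp at this
  have hderiv : ∀ x : ℝ, HasDerivAt g 0 x := by
    intro x
    have h1 : HasDerivAt (fun x : ℝ => (x : ℂ) - Complex.I) 1 x := by
      simpa using (Complex.ofRealCLM.hasDerivAt (x := x)).sub_const Complex.I
    have h1' : HasDerivAt (fun x : ℝ => (x : ℂ) + Complex.I) 1 x := by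
      simpa using (Complex.ofRealCLM.hasDerivAt (x := x)).add_const Complex.I
    have h2c : HasDerivAt (fun z : ℂ => (z - Complex.I) ^ ((s : ℂ) - k))
        (((s : ℂ) - k) * ((x : ℂ) - Complex.I) ^ ((s : ℂ) - k - 1) * 1) (x : ℂ) :=
      ((hasDerivAt_id _).sub_const Complex.I).cpow_const (Or.inr (by simp))
    have h2 : HasDerivAt (fun x : ℝ => ((x : ℂ) - Complex.I) ^ ((s : ℂ) - k))
        (((s : ℂ) - k) * ((x : ℂ) - Complex.I) ^ ((s : ℂ) - k - 1) * 1) x :=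
      h2c.comp_ofReal
    have h3c : HasDerivAt (fun z : ℂ => (z + Complex.I) ^ ((s : ℂ) + k))
        (((s : ℂ) + k) * ((x : ℂ) + Complex.I) ^ ((s : ℂ) + k - 1) * 1) (x : ℂ) :=
      ((hasDerivAt_id _).add_const Complex.I).cpow_const (Or.inr (by simp))
    have h3 : HasDerivAt (fun x : ℝ => ((x : ℂ) + Complex.I) ^ ((s : ℂ) + k))
        (((s : ℂ) + k) * ((x : ℂ) + Complex.I) ^ ((s : ℂ) + k - 1) * 1) x :=
      h3c.comp_ofReal
    have h4 := (((hf x).hasDerivAt.mul h2).mul h3)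
    convert h4 using 1
    case e'_4 => rfl
    case e'_8 => rfl
    have ea : ((x : ℂ) - Complex.I) ^ ((s : ℂ) - k - 1) =
        ((x : ℂ) - Complex.I) ^ ((s : ℂ) - k) / ((x : ℂ) - Complex.I) := by
      rw [Complex.cpow_sub _ _ (ha x), Complex.cpow_one]
    have eb : ((x : ℂ) + Complex.I) ^ ((s : ℂ) + k - 1) =
        ((x : ℂ) + Complex.I) ^ ((s : ℂ) + k) / ((x : ℂ) + Complex.I) := by
      rw [Complex.cpow_sub _ _ (hb x), Complex.cpow_one]
    rw [ea, eb]
    have hab : ((x : ℂ) - Complex.I) * ((x : ℂ) + Complex.I) = 1 + (x : ℂ)^2 := by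
      linear_combination -Complex.I_sq
    have h5 := hode x
    simp only [Pi.mul_apply]
    field_simp [ha x, hb x]
    set P : ℂ := ((x : ℂ) - Complex.I) ^ ((s : ℂ) - k) *
      ((x : ℂ) + Complex.I) ^ ((s : ℂ) + k) with hP
    linear_combination (-P) * h5 + (P * deriv f x) * Complex.I_sq
  have hconst : ∀ x : ℝ, g x = g 0 := by
    intro x
    exact is_const_of_deriv_eq_zero (fun y => (hderiv y).differentiableAt)
      (fun y => (hderiv y).deriv) x 0
  refine ⟨g 0, fun x => ?_⟩
  have hA : ((x : ℂ) - Complex.I) ^ ((s : ℂ) - k) ≠ 0 := by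
    simp [Complex.cpow_eq_zero_iff, ha x]
  have hB : ((x : ℂ) + Complex.I) ^ ((s : ℂ) + k) ≠ 0 := by
    simp [Complex.cpow_eq_zero_iff, hb x]
  have hx := hconst x
  rw [hg] at hx
  have e1 : ((x : ℂ) - Complex.I) ^ ((k : ℂ) - s) =
      (((x : ℂ) - Complex.I) ^ ((s : ℂ) - k))⁻¹ := by
    rw [show ((k : ℂ) - s) = -((s : ℂ) - k) by ring, Complex.cpow_neg]
  have e2 : ((x : ℂ) + Complex.I) ^ (-(k : ℂ) - s) =
      (((x : ℂ) + Complex.I) ^ ((s : ℂ) + k))⁻¹ := by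
    rw [show (-(k : ℂ) - s) = -((s : ℂ) + k) by ring, Complex.cpow_neg]
  rw [e1, e2]
  field_simp
  linear_combination hx
end

section
/- Let s ∈ ℝ with 1/2 < s < 1 and let n, k ∈ ℤ. Then for every r with 0 < r < 1, the function Φ_{2n,2k} is twice differentiable at r and satisfies ((1 − r²)²/4)·Φ_{2n,2k}''(r) + ((1 − r²)²/(4r))·Φ_{2n,2k}'(r) + ( −((1 − r²)²/(4r²))·(n² + k²) + ((1 − r⁴)/(2r²))·n·k + s·(1 − s) )·Φ_{2n,2k}(r) = 0. -/
open Filter Topology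

/-- Coefficient sequences whose consecutive ratios are (bounded by) a sequence tending to 1. -/
def GoodCoef (c : ℕ → ℝ) : Prop :=
  ∃ q : ℕ → ℝ, (∀ m, 0 ≤ q m) ∧ (∀ m, |c (m + 1)| ≤ q m * |c m|) ∧
    Tendsto q atTop (𝓝 1)

lemma tendsto_succ_div : Tendsto (fun m : ℕ => ((m : ℝ) + 2) / ((m : ℝ) + 1)) atTop (𝓝 1) := by
  have h1 : Tendsto (fun m : ℕ => 1 + 1 / ((m : ℝ) + 1)) atTop (𝓝 (1 + 0)) := by
    apply tendsto_const_nhds.add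
    exact tendsto_one_div_add_atTop_nhds_zero_nat
  rw [add_zero] at h1
  refine h1.congr fun m => ?_
  have : ((m : ℝ) + 1) ≠ 0 := by positivity
  field_simp
  ring

lemma GoodCoef.shift {c : ℕ → ℝ} (hc : GoodCoef c) :
    GoodCoef (fun m => ((m : ℝ) + 1) * c (m + 1)) := by
  obtain ⟨q, hq0, hqle, hqt⟩ := hc
  refine ⟨fun m => ((m : ℝ) + 2) / ((m : ℝ) + 1) * q (m + 1),
      fun m => mul_nonneg (by positivity) (hq0 _), fun m => ?_, ?_⟩
  · have h1 : |((m : ℝ) + 1 + 1) * c (m + 1 + 1)| = ((m : ℝ) + 2) * |c (m + 2)| := by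
      rw [abs_mul, abs_of_nonneg (by positivity : (0:ℝ) ≤ (m : ℝ) + 1 + 1)]
      ring_nf
    have h2 : |c (m + 2)| ≤ q (m + 1) * |c (m + 1)| := hqle (m + 1)
    have hm1 : ((m : ℝ) + 1) ≠ 0 := by positivity
    have key : |((m : ℝ) + 1 + 1) * c (m + 1 + 1)| ≤
        ((m : ℝ) + 2) / ((m : ℝ) + 1) * q (m + 1) * |((m : ℝ) + 1) * c (m + 1)| :=
      calc |((m : ℝ) + 1 + 1) * c (m + 1 + 1)| = ((m : ℝ) + 2) * |c (m + 2)| := h1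
      _ ≤ ((m : ℝ) + 2) * (q (m + 1) * |c (m + 1)|) := by
          apply mul_le_mul_of_nonneg_left h2 (by positivity)
      _ = ((m : ℝ) + 2) / ((m : ℝ) + 1) * q (m + 1) * |((m : ℝ) + 1) * c (m + 1)| := by
          rw [abs_mul, abs_of_nonneg (by positivity : (0:ℝ) ≤ (m : ℝ) + 1)]
          field_simp
    simpa using key
  · have := tendsto_succ_div.mul (hqt.comp (tendsto_add_atTop_nat 1))
    simpa using this

lemma GoodCoef.summable_aux {c : ℕ → ℝ} (hc : GoodCoef c) {ρ : ℝ} (h0 : 0 < ρ) (h1 : ρ < 1) :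
    Summable (fun m : ℕ => ((m : ℝ) + 1) * |c m| * ρ ^ m) := by
  obtain ⟨q, hq0, hqle, hqt⟩ := hc
  have hr1 : (1 + ρ) / 2 < 1 := by linarith
  apply summable_of_ratio_norm_eventually_le hr1
  have ht : Tendsto (fun m : ℕ => ((m : ℝ) + 2) / ((m : ℝ) + 1) * q m * ρ) atTop (𝓝 ρ) := by
    have := (tendsto_succ_div.mul hqt).mul_const ρ
    simpa using this
  have hev : ∀ᶠ m : ℕ in atTop, ((m : ℝ) + 2) / ((m : ℝ) + 1) * q m * ρ ≤ (1 + ρ) / 2 :=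
    ht.eventually_le_const (by linarith)
  filter_upwards [hev] with m hm
  have hm1 : (0:ℝ) < (m : ℝ) + 1 := by positivity
  have e1 : ‖((m : ℝ) + 1 + 1) * |c (m + 1)| * ρ ^ (m + 1)‖
      = ((m : ℝ) + 2) * |c (m + 1)| * ρ ^ (m + 1) := by
    rw [Real.norm_of_nonneg (by positivity)]; ring
  have e2 : ‖((m : ℝ) + 1) * |c m| * ρ ^ m‖ = ((m : ℝ) + 1) * |c m| * ρ ^ m := by
    rw [Real.norm_of_nonneg (by positivity)]
  rw [Nat.cast_add, Nat.cast_one, e1, e2]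
  calc ((m : ℝ) + 2) * |c (m + 1)| * ρ ^ (m + 1)
      ≤ ((m : ℝ) + 2) * (q m * |c m|) * ρ ^ (m + 1) := by
        apply mul_le_mul_of_nonneg_right _ (by positivity)
        exact mul_le_mul_of_nonneg_left (hqle m) (by positivity)
    _ = (((m : ℝ) + 2) / ((m : ℝ) + 1) * q m * ρ) * (((m : ℝ) + 1) * |c m| * ρ ^ m) := by
        field_simp
        ring
    _ ≤ (1 + ρ) / 2 * (((m : ℝ) + 1) * |c m| * ρ ^ m) := by
        apply mul_le_mul_of_nonneg_right hm (by positivity)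

lemma GoodCoef.summable_apply {c : ℕ → ℝ} (hc : GoodCoef c) {x : ℝ} (hx : |x| < 1) :
    Summable (fun m : ℕ => c m * x ^ m) := by
  have h0 : (0:ℝ) ≤ |x| := abs_nonneg x
  have hρ0 : 0 < (1 + |x|) / 2 := by linarith
  have hρ1 : (1 + |x|) / 2 < 1 := by linarith
  have hxρ : |x| ≤ (1 + |x|) / 2 := by linarith
  refine Summable.of_norm_bounded (hc.summable_aux hρ0 hρ1) fun m => ?_
  have h1 : ‖c m * x ^ m‖ = |c m| * |x| ^ m := by
    rw [norm_mul, norm_pow, Real.norm_eq_abs, Real.norm_eq_abs]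
  rw [h1]
  have h2 : |x| ^ m ≤ ((1 + |x|) / 2) ^ m := pow_le_pow_left₀ h0 hxρ m
  have h3 : |c m| ≤ ((m : ℝ) + 1) * |c m| := by
    nlinarith [abs_nonneg (c m), Nat.cast_nonneg (α := ℝ) m]
  calc |c m| * |x| ^ m ≤ (((m : ℝ) + 1) * |c m|) * ((1 + |x|) / 2) ^ m :=
        mul_le_mul h3 h2 (by positivity) (by positivity)
    _ = ((m : ℝ) + 1) * |c m| * ((1 + |x|) / 2) ^ m := by ring

lemma GoodCoef.hasDerivAt_tsum {c : ℕ → ℝ} (hc : GoodCoef c) {x : ℝ} (hx : |x| < 1) :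
    HasDerivAt (fun y : ℝ => ∑' m : ℕ, c m * y ^ m)
      (∑' m : ℕ, ((m : ℝ) + 1) * c (m + 1) * x ^ m) x := by
  have h0 := abs_nonneg x
  set ρ := (1 + |x|) / 2 with hρ
  have hρ0 : 0 < ρ := by rw [hρ]; linarith
  have hρ1 : ρ < 1 := by rw [hρ]; linarith
  have hxρ : |x| < ρ := by rw [hρ]; linarith
  have hsum := hc.summable_aux hρ0 hρ1
  have hg' : ∀ (m : ℕ) (y : ℝ), y ∈ Set.Ioo (-ρ) ρ →
      ‖c m * ((m : ℝ) * y ^ (m - 1))‖ ≤ (1/ρ) * (((m : ℝ) + 1) * |c m| * ρ ^ m) := by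
    intro m y hy
    have hyρ : |y| ≤ ρ := by
      rw [abs_le]; exact ⟨hy.1.le, hy.2.le⟩
    cases m with
    | zero => simp; positivity
    | succ p =>
      have e1 : ‖c (p + 1) * (((p + 1 : ℕ) : ℝ) * y ^ (p + 1 - 1))‖
          = |c (p + 1)| * (((p : ℝ) + 1) * |y| ^ p) := by
        rw [norm_mul, Real.norm_eq_abs, Real.norm_eq_abs, abs_mul, abs_pow]
        push_cast
        rw [abs_of_nonneg (by positivity : (0:ℝ) ≤ (p : ℝ) + 1)]
      rw [e1]
      have h2 : |y| ^ p ≤ ρ ^ p := pow_le_pow_left₀ (abs_nonneg y) hyρ p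
      have hc0 := abs_nonneg (c (p + 1))
      have e2 : (1/ρ) * ((((p + 1 : ℕ) : ℝ) + 1) * |c (p + 1)| * ρ ^ (p + 1))
          = (((p : ℝ) + 2) * |c (p + 1)|) * ρ ^ p := by
        push_cast
        field_simp
        ring
      rw [e2]
      have : |c (p + 1)| * (((p : ℝ) + 1) * |y| ^ p)
          ≤ |c (p + 1)| * (((p : ℝ) + 1) * ρ ^ p) := by
        apply mul_le_mul_of_nonneg_left _ hc0
        exact mul_le_mul_of_nonneg_left h2 (by positivity)
      refine this.trans ?_
      have hρp : (0:ℝ) ≤ ρ ^ p := by positivity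
      nlinarith
  have key : HasDerivAt (fun y : ℝ => ∑' m : ℕ, c m * y ^ m)
      (∑' m : ℕ, c m * ((m : ℝ) * x ^ (m - 1))) x := by
    apply hasDerivAt_tsum_of_isPreconnected (hsum.mul_left (1/ρ)) isOpen_Ioo
      (y₀ := 0) (isPreconnected_Ioo) ?_ hg' ?_ ?_ ?_
    · exact fun m y _ => (hasDerivAt_pow m y).const_mul (c m)
    · exact Set.mem_Ioo.mpr ⟨by linarith, hρ0⟩
    · apply summable_of_ne_finset_zero (s := {0})
      intro m hm
      have : m ≠ 0 := by simpa using hm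
      simp [zero_pow this]
    · exact Set.mem_Ioo.mpr (abs_lt.mp hxρ)
  have hs2 : Summable (fun m : ℕ => c m * ((m : ℝ) * x ^ (m - 1))) := by
    refine Summable.of_norm_bounded (hsum.mul_left (1/ρ)) fun m =>
      hg' m x (Set.mem_Ioo.mpr (abs_lt.mp hxρ))
  have e : ∑' m : ℕ, c m * ((m : ℝ) * x ^ (m - 1))
      = ∑' m : ℕ, ((m : ℝ) + 1) * c (m + 1) * x ^ m := by
    rw [Summable.tsum_eq_zero_add hs2]
    simp only [Nat.cast_zero, zero_mul, mul_zero, zero_add]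
    apply tsum_congr
    intro m
    push_cast
    ring_nf
  rw [e] at key
  exact key


noncomputable def hcoef (a b c : ℝ) (m : ℕ) : ℝ :=
  (ascPochhammer ℝ m).eval a * (ascPochhammer ℝ m).eval b /
    ((ascPochhammer ℝ m).eval c * (Nat.factorial m))

lemma hcoef_rec (a b : ℝ) {c : ℝ} (hc : 0 < c) (m : ℕ) :
    hcoef a b c (m + 1) * (((m : ℝ) + 1) * (c + m)) = hcoef a b c m * ((a + m) * (b + m)) := by
  have hpc : 0 < (ascPochhammer ℝ m).eval c := ascPochhammer_pos m c hc
  have hf : (0:ℝ) < (Nat.factorial m : ℝ) := by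
    exact_mod_cast Nat.factorial_pos m
  have hcm : (0:ℝ) < c + m := by positivity
  unfold hcoef
  rw [ascPochhammer_succ_eval, ascPochhammer_succ_eval, ascPochhammer_succ_eval,
    Nat.factorial_succ]
  push_cast
  field_simp

lemma tendsto_linear_div (a b : ℝ) :
    Tendsto (fun m : ℕ => (a + m) / (b + m)) atTop (𝓝 1) := by
  have hb : Tendsto (fun m : ℕ => b + (m : ℝ)) atTop atTop :=
    tendsto_atTop_add_const_left _ b tendsto_natCast_atTop_atTop
  have h1 : Tendsto (fun m : ℕ => 1 + (a - b) / (b + (m : ℝ))) atTop (𝓝 (1 + 0)) :=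
    tendsto_const_nhds.add (tendsto_const_nhds.div_atTop hb)
  rw [add_zero] at h1
  apply h1.congr'
  filter_upwards [hb.eventually_gt_atTop 0] with m hm
  field_simp
  ring

lemma goodCoef_hcoef (a b : ℝ) {c : ℝ} (hc : 0 < c) : GoodCoef (hcoef a b c) := by
  refine ⟨(fun m => |(a + m) * (b + m)| / ((1 + m) * (c + m))), ?_, ?_, ?_⟩
  · intro m
    have : (0:ℝ) < (1 + (m:ℝ)) * (c + m) := by positivity
    positivity
  · intro m
    have hrec := hcoef_rec a b hc m
    have hpos : (0:ℝ) < ((m : ℝ) + 1) * (c + m) := by positivity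
    have he : hcoef a b c (m + 1) = hcoef a b c m * ((a + m) * (b + m)) / (((m:ℝ) + 1) * (c + m)) := by
      rw [eq_div_iff (ne_of_gt hpos)]
      exact hrec
    rw [he, abs_div, abs_of_pos hpos]
    simp only [abs_mul]
    apply le_of_eq
    push_cast
    ring
  · have h1 : Tendsto (fun m : ℕ => ((a + m) / (1 + m)) * ((b + m) / (c + m))) atTop (𝓝 (1 * 1)) :=
      (tendsto_linear_div a 1).mul (tendsto_linear_div b c)
    rw [mul_one] at h1
    apply h1.congr'
    have ha : Tendsto (fun m : ℕ => a + (m : ℝ)) atTop atTop :=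
      tendsto_atTop_add_const_left _ a tendsto_natCast_atTop_atTop
    have hbt : Tendsto (fun m : ℕ => b + (m : ℝ)) atTop atTop :=
      tendsto_atTop_add_const_left _ b tendsto_natCast_atTop_atTop
    filter_upwards [ha.eventually_gt_atTop 0, hbt.eventually_gt_atTop 0] with m hma hmb
    have h1m : (0:ℝ) < 1 + m := by positivity
    have hcm : (0:ℝ) < c + m := by positivity
    rw [abs_of_pos (by positivity)]
    field_simp

lemma hyper_ode (a b : ℝ) {c x F0 F1 F2 : ℝ} (hc : 0 < c)
    (h0 : HasSum (fun m : ℕ => hcoef a b c m * x ^ m) F0)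
    (h1 : HasSum (fun m : ℕ => ((m : ℝ) + 1) * hcoef a b c (m + 1) * x ^ m) F1)
    (h2 : HasSum (fun m : ℕ => ((m : ℝ) + 1) * ((m : ℝ) + 2) * hcoef a b c (m + 2) * x ^ m) F2) :
    x * (1 - x) * F2 + (c - (a + b + 1) * x) * F1 - a * b * F0 = 0 := by
  set f1 : ℕ → ℝ := fun m => (m : ℝ) * hcoef a b c m * x ^ m with hf1
  set f2 : ℕ → ℝ := fun m => (m : ℝ) * ((m : ℝ) - 1) * hcoef a b c m * x ^ m with hf2
  set f3 : ℕ → ℝ := fun m => (m : ℝ) * ((m : ℝ) + 1) * hcoef a b c (m + 1) * x ^ m with hf3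
  have T1 : HasSum f1 (x * F1) := by
    have e : (fun m : ℕ => f1 (m + 1)) = fun m : ℕ => x * (((m : ℝ) + 1) * hcoef a b c (m + 1) * x ^ m) := by
      funext m; simp only [hf1]; push_cast; ring
    have := (hasSum_nat_add_iff (f := f1) 1).mp (e ▸ h1.mul_left x)
    simpa [hf1] using this
  have T2 : HasSum f2 (x ^ 2 * F2) := by
    have e : (fun m : ℕ => f2 (m + 2)) = fun m : ℕ =>
        x ^ 2 * (((m : ℝ) + 1) * ((m : ℝ) + 2) * hcoef a b c (m + 2) * x ^ m) := by
      funext m; simp only [hf2]; push_cast; ring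
    have := (hasSum_nat_add_iff (f := f2) 2).mp (e ▸ h2.mul_left (x ^ 2))
    simpa [hf2, Finset.sum_range_succ] using this
  have T3 : HasSum f3 (x * F2) := by
    have e : (fun m : ℕ => f3 (m + 1)) = fun m : ℕ =>
        x * (((m : ℝ) + 1) * ((m : ℝ) + 2) * hcoef a b c (m + 2) * x ^ m) := by
      funext m; simp only [hf3]; push_cast; ring
    have := (hasSum_nat_add_iff (f := f3) 1).mp (e ▸ h2.mul_left x)
    simpa [hf3] using this
  have Hbig := ((T3.sub T2).add ((h1.mul_left c).sub (T1.mul_left (a + b + 1)))).sub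
    (h0.mul_left (a * b))
  have hz : (fun m : ℕ => f3 m - f2 m +
      (c * (((m : ℝ) + 1) * hcoef a b c (m + 1) * x ^ m) - (a + b + 1) * f1 m) -
      a * b * (hcoef a b c m * x ^ m)) = fun _ => (0 : ℝ) := by
    funext m
    simp only [hf1, hf2, hf3]
    have hrec := hcoef_rec a b hc m
    linear_combination (x ^ m) * hrec
  rw [hz] at Hbig
  have := Hbig.unique hasSum_zero
  linear_combination this

noncomputable def Fser (a b cc : ℝ) : ℝ → ℝ := fun y => ∑' m : ℕ, hcoef a b cc m * y ^ m

noncomputable def F1ser (a b cc : ℝ) : ℝ → ℝ :=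
  fun y => ∑' m : ℕ, ((m : ℝ) + 1) * hcoef a b cc (m + 1) * y ^ m

noncomputable def F2ser (a b cc : ℝ) : ℝ → ℝ :=
  fun y => ∑' m : ℕ, ((m : ℝ) + 1) * ((m : ℝ) + 2) * hcoef a b cc (m + 2) * y ^ m

theorem hyper_aux (a b : ℝ) {cc : ℝ} (hcc : 0 < cc) (N : ℕ) (s : ℝ) {r : ℝ}
    (hr : 0 < r) (hr1 : r < 1) (f : ℝ → ℝ)
    (hf : f = fun t : ℝ => (1 - t ^ 2) ^ s * t ^ N * Fser a b cc (t ^ 2)) :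
    ∃ F0 F1 F2 H : ℝ,
      H = -2*s*r^2*F0 + (N:ℝ)*(1-r^2)*F0 + 2*r^2*(1-r^2)*F1 ∧
      r^2*(1-r^2)*F2 + (cc - (a+b+1)*r^2)*F1 - a*b*F0 = 0 ∧
      f r = (1-r^2)^s * r^N * F0 ∧
      DifferentiableAt ℝ f r ∧
      deriv f r = (1-r^2)^(s-1) * r^N / r * H ∧
      DifferentiableAt ℝ (deriv f) r ∧
      deriv (deriv f) r = (1-r^2)^(s-2) * r^N / r^2 *
        (-2*(s-1)*r^2*H + ((N:ℝ)-1)*(1-r^2)*H + 2*r^2*(1-r^2)*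
          (-2*s*F0 - (N:ℝ)*F0 + ((N:ℝ)*(1-r^2) - 2*s*r^2 + 2 - 4*r^2)*F1
            + 2*r^2*(1-r^2)*F2)) := by
  have hG : GoodCoef (hcoef a b cc) := goodCoef_hcoef a b hcc
  have hG1 : GoodCoef (fun m : ℕ => ((m : ℝ) + 1) * hcoef a b cc (m + 1)) := hG.shift
  have hI : ∀ t : ℝ, t ∈ Set.Ioo (-1:ℝ) 1 → |t ^ 2| < 1 := by
    intro t ht
    rw [abs_pow]
    have h1 : |t| < 1 := abs_lt.mpr ⟨ht.1, ht.2⟩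
    exact pow_lt_one₀ (abs_nonneg t) h1 (by norm_num)
  have hD1sum : ∀ x : ℝ, |x| < 1 → HasDerivAt (Fser a b cc) (F1ser a b cc x) x := by
    intro x hx
    exact hG.hasDerivAt_tsum hx
  have hD2sum : ∀ x : ℝ, |x| < 1 → HasDerivAt (F1ser a b cc) (F2ser a b cc x) x := by
    intro x hx
    have h := hG1.hasDerivAt_tsum hx
    have e2 : F2ser a b cc x
        = ∑' m : ℕ, ((m:ℝ)+1) * ((fun m : ℕ => ((m:ℝ)+1) * hcoef a b cc (m+1)) (m+1)) * x^m :=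
      tsum_congr (fun m => by push_cast; ring)
    rw [F2ser] at e2 ⊢
    rw [e2]
    exact h
  have hmem : r ∈ Set.Ioo (-1:ℝ) 1 := ⟨by linarith, hr1⟩
  have hxr : |r ^ 2| < 1 := hI r hmem
  have hApos : (0:ℝ) < 1 - r ^ 2 := by
    have := (abs_lt.mp hxr).2; linarith
  -- HasSum facts at x = r^2
  have hS0 : HasSum (fun m : ℕ => hcoef a b cc m * (r^2)^m) (Fser a b cc (r^2)) :=
    (hG.summable_apply hxr).hasSum
  have hS1 : HasSum (fun m : ℕ => ((m:ℝ)+1) * hcoef a b cc (m+1) * (r^2)^m) (F1ser a b cc (r^2)) :=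
    (hG1.summable_apply hxr).hasSum
  have hS2 : HasSum (fun m : ℕ => ((m:ℝ)+1) * ((m:ℝ)+2) * hcoef a b cc (m+2) * (r^2)^m)
      (F2ser a b cc (r^2)) := by
    have hsumm : Summable (fun m : ℕ => ((m:ℝ)+1) * ((m:ℝ)+2) * hcoef a b cc (m+2) * (r^2)^m) :=
      (hG1.shift.summable_apply hxr).congr (fun m => by push_cast; ring)
    exact hsumm.hasSum
  have hODE := hyper_ode a b hcc hS0 hS1 hS2
  -- first derivative everywhere on Ioo (-1) 1
  have hDf : ∀ t ∈ Set.Ioo (-1:ℝ) 1, HasDerivAt f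
      (((-(2*t)) * s * (1-t^2)^(s-1) * t^N + (1-t^2)^s * ((N:ℝ) * t^(N-1))) * Fser a b cc (t^2)
        + (1-t^2)^s * t^N * (F1ser a b cc (t^2) * (2*t))) t := by
    intro t ht
    have hx2 := hI t ht
    have hApt : (0:ℝ) < 1 - t^2 := by have := (abs_lt.mp hx2).2; linarith
    have hsq : HasDerivAt (fun y : ℝ => y^2) (2*t) t := by simpa using hasDerivAt_pow 2 t
    have hA : HasDerivAt (fun y : ℝ => 1 - y^2) (-(2*t)) t := by simpa using hsq.const_sub 1
    have h1 : HasDerivAt (fun y : ℝ => (1-y^2)^s) ((-(2*t)) * s * (1-t^2)^(s-1)) t :=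
      hA.rpow_const (Or.inl hApt.ne')
    have h2 := hasDerivAt_pow N t
    have h3 : HasDerivAt (fun y : ℝ => Fser a b cc (y^2)) (F1ser a b cc (t^2) * (2*t)) t :=
      HasDerivAt.comp (h₂ := Fser a b cc) (h := fun y : ℝ => y ^ 2) t (hD1sum (t^2) hx2) hsq
    have := (h1.mul h2).mul h3
    rw [hf]
    exact this
  have hder1 : deriv f r =
      ((-(2*r)) * s * (1-r^2)^(s-1) * r^N + (1-r^2)^s * ((N:ℝ) * r^(N-1))) * Fser a b cc (r^2)
        + (1-r^2)^s * r^N * (F1ser a b cc (r^2) * (2*r)) := (hDf r hmem).deriv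
  have hev : deriv f =ᶠ[nhds r] fun t =>
      ((-(2*t)) * s * (1-t^2)^(s-1) * t^N + (1-t^2)^s * ((N:ℝ) * t^(N-1))) * Fser a b cc (t^2)
        + (1-t^2)^s * t^N * (F1ser a b cc (t^2) * (2*t)) := by
    filter_upwards [Ioo_mem_nhds (by linarith : (-1:ℝ) < r) hr1] with t ht
    exact (hDf t ht).deriv
  -- second derivative at r
  have hsq : HasDerivAt (fun y : ℝ => y^2) (2*r) r := by simpa using hasDerivAt_pow 2 r
  have hA : HasDerivAt (fun y : ℝ => 1 - y^2) (-(2*r)) r := by simpa using hsq.const_sub 1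
  have h1 : HasDerivAt (fun y : ℝ => (1-y^2)^s) ((-(2*r)) * s * (1-r^2)^(s-1)) r :=
    hA.rpow_const (Or.inl hApos.ne')
  have hP1 : HasDerivAt (fun y : ℝ => (1-y^2)^(s-1)) ((-(2*r)) * (s-1) * (1-r^2)^(s-1-1)) r :=
    hA.rpow_const (Or.inl hApos.ne')
  have h3 : HasDerivAt (fun y : ℝ => Fser a b cc (y^2)) (F1ser a b cc (r^2) * (2*r)) r :=
    HasDerivAt.comp (h₂ := Fser a b cc) (h := fun y : ℝ => y ^ 2) r (hD1sum (r^2) hxr) hsq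
  have h3' : HasDerivAt (fun y : ℝ => F1ser a b cc (y^2)) (F2ser a b cc (r^2) * (2*r)) r :=
    HasDerivAt.comp (h₂ := F1ser a b cc) (h := fun y : ℝ => y ^ 2) r (hD2sum (r^2) hxr) hsq
  have hid2 : HasDerivAt (fun y : ℝ => 2*y) 2 r := by
    simpa using (hasDerivAt_id r).const_mul (2:ℝ)
  have hneg : HasDerivAt (fun y : ℝ => -(2*y)) (-2) r := hid2.neg
  have hA1 := ((hneg.mul_const s).mul hP1).mul (hasDerivAt_pow N r)
  have hB1 := h1.mul ((hasDerivAt_pow (N-1) r).const_mul ((N:ℝ)))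
  have hterm1 := (hA1.add hB1).mul h3
  have hterm2 := (h1.mul (hasDerivAt_pow N r)).mul (h3'.mul hid2)
  have hDD := hterm1.add hterm2
  have hdiff2 : DifferentiableAt ℝ (deriv f) r :=
    (hev.differentiableAt_iff).mpr hDD.differentiableAt
  have hder2 := (hev.deriv_eq).trans hDD.deriv
  -- rpow splitting
  have hsplit : ∀ p : ℝ, (1 - r^2) ^ (p + 1) = (1 - r^2) ^ p * (1 - r^2) := by
    intro p; rw [Real.rpow_add hApos, Real.rpow_one]
  have e_s : (1 - r^2)^s = (1 - r^2)^(s-1) * (1 - r^2) := by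
    have := hsplit (s - 1); rwa [sub_add_cancel] at this
  have e_s1 : (1 - r^2)^(s-1) = (1 - r^2)^(s-2) * (1 - r^2) := by
    have := hsplit (s - 2); rwa [show s - 2 + 1 = s - 1 by ring] at this
  have e_s11 : (1 - r^2)^(s-1-1) = (1 - r^2)^(s-2) := by rw [show s-1-1 = s-2 by ring]
  have hr0 : r ≠ 0 := hr.ne'
  refine ⟨Fser a b cc (r^2), F1ser a b cc (r^2), F2ser a b cc (r^2),
    -2*s*r^2*(Fser a b cc (r^2)) + (N:ℝ)*(1-r^2)*(Fser a b cc (r^2))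
      + 2*r^2*(1-r^2)*(F1ser a b cc (r^2)), rfl, hODE, by rw [hf], (hDf r hmem).differentiableAt,
    ?_, hdiff2, ?_⟩
  · rw [hder1, e_s]
    rcases N with _ | M
    · push_cast
      field_simp
      ring
    · simp only [Nat.succ_sub_one]
      push_cast
      field_simp
      ring
  · simp only [Pi.mul_apply, Pi.add_apply] at hder2
    rw [hder2, e_s, e_s1, e_s11]
    rcases N with _ | M
    · push_cast
      field_simp
      ring
    · rcases M with _ | M
      · simp only [Nat.succ_sub_one]
        push_cast
        field_simp
        ring
      · simp only [Nat.succ_sub_one]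
        push_cast
        field_simp
        ring
/-- The Gauss hypergeometric series `F(a, b; c; x) = Σ (a)_m (b)_m / ((c)_m m!) x^m`. -/
noncomputable def hyperF (a b c x : ℝ) : ℝ :=
  ∑' m : ℕ, ((ascPochhammer ℝ m).eval a * (ascPochhammer ℝ m).eval b /
    ((ascPochhammer ℝ m).eval c * (Nat.factorial m))) * x ^ m

/-- The sign `ε = 1` if `n ≥ k`, `ε = −1` otherwise. -/
noncomputable def eps (n k : ℤ) : ℝ := if k ≤ n then 1 else -1

/-- `Φ_{2n,2k}(r) = (1 − r²)^s r^{|n−k|} F(s − εk, s + εn; 1 + |n−k|; r²)`. -/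
noncomputable def Phi (s : ℝ) (n k : ℤ) (r : ℝ) : ℝ :=
  (1 - r ^ 2) ^ s * r ^ (n - k).natAbs *
    hyperF (s - eps n k * k) (s + eps n k * n) (1 + (n - k).natAbs) (r ^ 2)

theorem casimir_radial_ode (s : ℝ) (hs : 1/2 < s) (hs1 : s < 1) (n k : ℤ)
    (r : ℝ) (hr : 0 < r) (hr1 : r < 1) :
    DifferentiableAt ℝ (Phi s n k) r ∧
    DifferentiableAt ℝ (deriv (Phi s n k)) r ∧
    ((1 - r ^ 2) ^ 2 / 4) * deriv (deriv (Phi s n k)) r +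
      ((1 - r ^ 2) ^ 2 / (4 * r)) * deriv (Phi s n k) r +
      (-((1 - r ^ 2) ^ 2 / (4 * r ^ 2)) * ((n : ℝ) ^ 2 + (k : ℝ) ^ 2) +
        ((1 - r ^ 4) / (2 * r ^ 2)) * (n : ℝ) * (k : ℝ) + s * (1 - s)) * Phi s n k r = 0 := by
  have hcc : (0:ℝ) < 1 + ((n - k).natAbs : ℝ) := by positivity
  have hPhif : Phi s n k = fun t : ℝ => (1 - t ^ 2) ^ s * t ^ ((n - k).natAbs) *
      Fser (s - eps n k * k) (s + eps n k * n) (1 + ((n - k).natAbs : ℝ)) (t ^ 2) := rfl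
  obtain ⟨F0, F1, F2, H, hH, hODE, hval, hd1, hder1, hd2, hder2⟩ :=
    hyper_aux (s - eps n k * k) (s + eps n k * n) hcc ((n - k).natAbs) s hr hr1
      (Phi s n k) hPhif
  refine ⟨hd1, hd2, ?_⟩
  rw [hder1, hder2, hval, hH]
  have hApos : (0:ℝ) < 1 - r ^ 2 := by nlinarith
  have hsplit : ∀ p : ℝ, (1 - r^2) ^ (p + 1) = (1 - r^2) ^ p * (1 - r^2) := fun p => by
    rw [Real.rpow_add hApos, Real.rpow_one]
  have e_s : (1 - r^2)^s = (1 - r^2)^(s-1) * (1 - r^2) := by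
    have := hsplit (s - 1); rwa [sub_add_cancel] at this
  have e_s1 : (1 - r^2)^(s-1) = (1 - r^2)^(s-2) * (1 - r^2) := by
    have := hsplit (s - 2); rwa [show s - 2 + 1 = s - 1 by ring] at this
  rw [e_s, e_s1]
  have hr0 : r ≠ 0 := hr.ne'
  have hxA : r^2 * (1 - r^2) ≠ 0 := by positivity
  have hE : (eps n k = 1 ∧ ((n - k).natAbs : ℝ) = (n : ℝ) - k) ∨
      (eps n k = -1 ∧ ((n - k).natAbs : ℝ) = (k : ℝ) - n) := by
    rcases le_or_gt k n with h | h
    · refine Or.inl ⟨by simp [eps, h], ?_⟩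
      have h1 : ((n - k).natAbs : ℤ) = n - k := Int.natAbs_of_nonneg (by omega)
      calc ((n - k).natAbs : ℝ) = (((n - k).natAbs : ℤ) : ℝ) := (Int.cast_natCast _).symm
        _ = ((n - k : ℤ) : ℝ) := by rw [h1]
        _ = (n : ℝ) - k := by push_cast; ring
    · refine Or.inr ⟨by simp [eps, not_le.mpr h], ?_⟩
      have h1 : ((n - k).natAbs : ℤ) = k - n := by omega
      calc ((n - k).natAbs : ℝ) = (((n - k).natAbs : ℤ) : ℝ) := (Int.cast_natCast _).symm
        _ = ((k - n : ℤ) : ℝ) := by rw [h1]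
        _ = (k : ℝ) - n := by push_cast; ring
  rcases hE with ⟨hE1, hN⟩ | ⟨hE1, hN⟩
  · rw [hE1] at hODE
    rw [hN] at hODE ⊢
    have hF2 : F2 = ((s - 1*(k:ℝ))*(s + 1*(n:ℝ))*F0
        - ((1 + ((n:ℝ) - (k:ℝ))) - ((s - 1*(k:ℝ)) + (s + 1*(n:ℝ)) + 1)*r^2)*F1)
          / (r^2*(1-r^2)) := by
      rw [eq_div_iff hxA]
      linear_combination hODE
    rw [hF2]
    field_simp
    ring
  · rw [hE1] at hODE
    rw [hN] at hODE ⊢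
    have hF2 : F2 = ((s - (-1)*(k:ℝ))*(s + (-1)*(n:ℝ))*F0
        - ((1 + ((k:ℝ) - (n:ℝ))) - ((s - (-1)*(k:ℝ)) + (s + (-1)*(n:ℝ)) + 1)*r^2)*F1)
          / (r^2*(1-r^2)) := by
      rw [eq_div_iff hxA]
      linear_combination hODE
    rw [hF2]
    field_simp
    ring
end

section
/- Let s ∈ ℝ with 1/2 < s < 1 and let n, k ∈ ℤ with n ≥ k. Then for every r with 0 < r < 1, −n·((1 − r²)/r)·Φ_{2n,2k}(r) + (1 − r²)·Φ_{2n,2k}'(r) + k·((1 + r²)/r)·Φ_{2n,2k}(r) = −2·((s − k)·(1 − s − k)/(1 + n − k))·Φ_{2n,2k−2}(r). (This expresses the action of the lowering operator: L.Φ_{2n,2k} = −2·((s−k)(1−s−k)/(1+n−k))·Φ_{2n,2k−2} for n ≥ k.) -/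
open Filter Polynomial Topology


private noncomputable def coeffA (a b c : ℝ) (m : ℕ) : ℝ :=
  (ascPochhammer ℝ m).eval a * (ascPochhammer ℝ m).eval b /
    ((ascPochhammer ℝ m).eval c * (Nat.factorial m))

private lemma poch_ne_zero {α : ℝ} (h : ∀ j : ℕ, α + j ≠ 0) : ∀ m : ℕ,
    (ascPochhammer ℝ m).eval α ≠ 0
  | 0 => by simp
  | (m+1) => by
      rw [ascPochhammer_succ_eval]
      exact mul_ne_zero (poch_ne_zero h m) (h m)

private lemma poch_shift (α : ℝ) (m : ℕ) :
    α * (ascPochhammer ℝ m).eval (α + 1) = (ascPochhammer ℝ m).eval α * (α + m) := by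
  rw [← ascPochhammer_succ_eval, ascPochhammer_succ_left]
  simp [eval_comp]

private lemma tendsto_lin_ratio (p q : ℝ) :
    Tendsto (fun m : ℕ => (p + m) / (q + m)) atTop (𝓝 1) := by
  have h0 : Tendsto (fun m : ℕ => q + (m : ℝ)) atTop atTop :=
    tendsto_atTop_add_const_left _ q tendsto_natCast_atTop_atTop
  have h1 : Tendsto (fun m : ℕ => (p - q) / (q + m)) atTop (𝓝 0) :=
    Tendsto.div_atTop tendsto_const_nhds h0
  have h2 : Tendsto (fun m : ℕ => 1 + (p - q) / (q + m)) atTop (𝓝 1) := by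
    simpa using (tendsto_const_nhds (x := (1:ℝ)) (f := atTop)).add h1
  refine h2.congr' ?_
  filter_upwards [h0.eventually_gt_atTop 0] with m hm
  field_simp
  ring

private lemma summable_core (a b c : ℝ) (ha : ∀ j : ℕ, a + j ≠ 0) (hb : ∀ j : ℕ, b + j ≠ 0)
    (hc : ∀ j : ℕ, c + j ≠ 0) (d e : ℝ) (hde : ∀ m : ℕ, d + e * m ≠ 0)
    (hrat : Tendsto (fun m : ℕ => (d + e * (m + 1)) / (d + e * m)) atTop (𝓝 1))
    (x : ℝ) (hx : |x| < 1) :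
    Summable (fun m : ℕ => (d + e * m) * coeffA a b c m * x ^ m) := by
  rcases eq_or_ne x 0 with rfl | hx0
  · apply summable_of_ne_finset_zero (s := ({0} : Finset ℕ))
    intro m hm
    simp only [Finset.mem_singleton] at hm
    simp [zero_pow hm]
  · set f : ℕ → ℝ := fun m => (d + e * m) * coeffA a b c m * x ^ m with hf
    have hfne : ∀ m, f m ≠ 0 := by
      intro m
      have h1 := poch_ne_zero ha m; have h2 := poch_ne_zero hb m; have h3 := poch_ne_zero hc m
      have h4 : ((Nat.factorial m : ℝ)) ≠ 0 := by positivity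
      exact mul_ne_zero (mul_ne_zero (hde m)
        (div_ne_zero (mul_ne_zero h1 h2) (mul_ne_zero h3 h4))) (pow_ne_zero _ hx0)
    have key : ∀ m : ℕ, ‖f (m+1)‖ / ‖f m‖ =
        |((d + e * (m + 1)) / (d + e * m)) * (((a + m) / (c + m)) * ((b + m) / (1 + m))) * x| := by
      intro m
      rw [Real.norm_eq_abs, Real.norm_eq_abs, ← abs_div]
      congr 1
      have h1 := poch_ne_zero ha m; have h2 := poch_ne_zero hb m; have h3 := poch_ne_zero hc m
      have h4 : ((Nat.factorial m : ℝ)) ≠ 0 := by positivity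
      have h5 : (1 : ℝ) + m ≠ 0 := by positivity
      have h6 := hde m
      have h7 := hc m
      simp only [hf, coeffA, ascPochhammer_succ_eval, Nat.factorial_succ, pow_succ]
      push_cast
      field_simp
      ring
    have hlim : Tendsto (fun m : ℕ =>
        |((d + e * (m + 1)) / (d + e * m)) * (((a + m) / (c + m)) * ((b + m) / (1 + m))) * x|)
        atTop (𝓝 |1 * (1 * 1) * x|) :=
      Tendsto.abs ((hrat.mul ((tendsto_lin_ratio a c).mul (tendsto_lin_ratio b 1))).mul
        tendsto_const_nhds)
    have hlim' := hlim
    rw [show |1 * (1 * 1) * x| = |x| by simp] at hlim'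
    exact summable_of_ratio_test_tendsto_lt_one hx (Eventually.of_forall hfne)
      ((tendsto_congr key).mpr hlim')

private lemma summable_W (a b c : ℝ) (ha : ∀ j : ℕ, a + j ≠ 0) (hb : ∀ j : ℕ, b + j ≠ 0)
    (hc : ∀ j : ℕ, c + j ≠ 0) (x : ℝ) (hx : |x| < 1) (d e : ℝ) :
    Summable (fun m : ℕ => (d + e * m) * coeffA a b c m * x ^ m) := by
  have W1 := summable_core a b c ha hb hc 1 0 (by intro m; norm_num)
    (by simpa using tendsto_const_nhds (x := (1:ℝ)) (f := (atTop : Filter ℕ))) x hx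
  have W2 := summable_core a b c ha hb hc 1 1 (by intro m; positivity) ?_ x hx
  · have h := (W2.mul_left e).add (W1.mul_left (d - e))
    refine h.congr fun m => ?_
    push_cast
    ring
  · refine (tendsto_lin_ratio 2 1).congr fun m => ?_
    push_cast
    ring_nf

private lemma summable_shift (a b c : ℝ) (ha : ∀ j : ℕ, a + j ≠ 0) (hb : ∀ j : ℕ, b + j ≠ 0)
    (hc : ∀ j : ℕ, c + j ≠ 0) (x : ℝ) (hx : |x| < 1) (hx0 : x ≠ 0) :
    Summable (fun m : ℕ => ((m : ℝ) + 1) * coeffA a b c (m + 1) * x ^ m) := by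
  have W := summable_W a b c ha hb hc x hx 0 1
  have W' : Summable (fun m : ℕ => (0 + 1 * ((m : ℝ) + 1)) * coeffA a b c (m + 1) * x ^ (m + 1)) := by
    have := (summable_nat_add_iff 1).mpr W
    refine this.congr fun m => ?_
    push_cast
    ring
  have := W'.mul_left x⁻¹
  refine this.congr fun m => ?_
  rw [pow_succ]
  field_simp
  ring


private lemma nonint (s : ℝ) (hs : 1/2 < s) (hs1 : s < 1) (z : ℤ) : s + z ≠ 0 := by
  intro h
  have h1 : (-1 : ℤ) < z := by exact_mod_cast (show ((-1 : ℤ) : ℝ) < z by push_cast; linarith)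
  have h2 : z < (0 : ℤ) := by exact_mod_cast (show (z : ℝ) < ((0 : ℤ) : ℝ) by push_cast; linarith)
  omega

private lemma hyperF_eq (a b c x : ℝ) : hyperF a b c x = ∑' m : ℕ, coeffA a b c m * x ^ m := rfl

private lemma hasDerivAt_F (a b c : ℝ) (ha : ∀ j : ℕ, a + j ≠ 0) (hb : ∀ j : ℕ, b + j ≠ 0)
    (hc : ∀ j : ℕ, c + j ≠ 0) (x : ℝ) (hx : |x| < 1) :
    HasDerivAt (hyperF a b c) (∑' m : ℕ, ((m : ℝ) + 1) * coeffA a b c (m + 1) * x ^ m) x := by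
  set ρ : ℝ := (1 + |x|) / 2 with hρ
  have habs : 0 ≤ |x| := abs_nonneg x
  have hxρ : |x| < ρ := by rw [hρ]; linarith
  have hρ1 : ρ < 1 := by rw [hρ]; linarith
  have hρ0 : 0 < ρ := by positivity
  have hρa : |ρ| < 1 := by rwa [abs_of_pos hρ0]
  have hxt : x ∈ Metric.ball (0 : ℝ) ρ := by
    simpa [Real.norm_eq_abs] using hxρ
  set g : ℕ → ℝ → ℝ := fun m y => coeffA a b c (m + 1) * y ^ (m + 1) with hg
  set g' : ℕ → ℝ → ℝ := fun m y => ((m : ℝ) + 1) * coeffA a b c (m + 1) * y ^ m with hg'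
  set u : ℕ → ℝ := fun m => |((m : ℝ) + 1) * coeffA a b c (m + 1) * ρ ^ m| with hu
  have hus : Summable u := by
    rw [hu]
    rw [summable_abs_iff]
    exact summable_shift a b c ha hb hc ρ hρa hρ0.ne'
  have hgder : ∀ m : ℕ, ∀ y ∈ Metric.ball (0 : ℝ) ρ, HasDerivAt (g m) (g' m y) y := by
    intro m y _
    have h := (hasDerivAt_pow (m + 1) y).const_mul (coeffA a b c (m + 1))
    refine h.congr_deriv ?_
    push_cast
    simp only [hg', Nat.add_sub_cancel]
    ring
  have hbound : ∀ m : ℕ, ∀ y ∈ Metric.ball (0 : ℝ) ρ, ‖g' m y‖ ≤ u m := by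
    intro m y hy
    have hy' : |y| ≤ ρ := le_of_lt (by simpa [Real.norm_eq_abs] using hy)
    calc ‖g' m y‖ = |((m : ℝ) + 1) * coeffA a b c (m + 1)| * |y| ^ m := by
          rw [Real.norm_eq_abs, hg', abs_mul, abs_pow]
      _ ≤ |((m : ℝ) + 1) * coeffA a b c (m + 1)| * ρ ^ m := by
          gcongr
      _ = u m := by simp [hu, abs_mul, abs_pow, abs_of_pos hρ0]
  have hg0 : Summable (fun m : ℕ => g m x) := by
    have W1 := summable_W a b c ha hb hc x hx 1 0
    have h := (summable_nat_add_iff 1).mpr W1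
    refine h.congr fun m => ?_
    rw [hg]
    push_cast
    ring
  have hder : HasDerivAt (fun y => ∑' m, g m y) (∑' m, g' m x) x :=
    hasDerivAt_tsum_of_isPreconnected hus Metric.isOpen_ball
      (convex_ball (0:ℝ) ρ).isPreconnected hgder hbound hxt hg0 hxt
  have heq : ∀ y ∈ Metric.ball (0 : ℝ) ρ, hyperF a b c y = coeffA a b c 0 + ∑' m, g m y := by
    intro y hy
    have hy1 : |y| < 1 := lt_trans (by simpa [Real.norm_eq_abs] using hy) hρ1
    have hsum : Summable (fun m : ℕ => coeffA a b c m * y ^ m) := by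
      have := summable_W a b c ha hb hc y hy1 1 0
      refine this.congr fun m => ?_
      ring
    rw [hyperF_eq, hsum.tsum_eq_zero_add]
    simp [hg]
  have hev : hyperF a b c =ᶠ[𝓝 x] fun y => coeffA a b c 0 + ∑' m, g m y := by
    filter_upwards [Metric.isOpen_ball.mem_nhds hxt] with y hy using heq y hy
  have := ((hasDerivAt_const x (coeffA a b c 0)).add hder).congr_of_eventuallyEq hev
  simpa using this

private lemma starPoch (a b c : ℝ) (hc : ∀ j : ℕ, c + j ≠ 0) (m : ℕ) :
    (-(a + m)) * coeffA a b c m + ((m : ℝ) + 1) * coeffA a b c (m + 1)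
      = -(a * (c - b) / c) * coeffA (a + 1) b (c + 1) m := by
  have hc' : ∀ j : ℕ, c + 1 + j ≠ 0 := by
    intro j
    have := hc (j + 1)
    push_cast at this ⊢
    intro h; apply this; linarith
  have hc0 : c ≠ 0 := by simpa using hc 0
  have hcm : c + m ≠ 0 := hc m
  have hF : ((Nat.factorial m : ℝ)) ≠ 0 := by positivity
  have hqc := poch_ne_zero hc' m
  have hpc := poch_ne_zero hc m
  have R1 := poch_shift a m
  have R2 := poch_shift c m
  set pa := (ascPochhammer ℝ m).eval a
  set qa := (ascPochhammer ℝ m).eval (a + 1)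
  set pb := (ascPochhammer ℝ m).eval b
  set pc := (ascPochhammer ℝ m).eval c
  set qc := (ascPochhammer ℝ m).eval (c + 1)
  simp only [coeffA, ascPochhammer_succ_eval, Nat.factorial_succ]
  push_cast
  field_simp
  rw [neg_div', div_eq_div_iff hpc hqc]
  linear_combination (a + m) * (ascPochhammer ℝ m).eval a * (ascPochhammer ℝ m).eval b * (b - c) * R2
    + (ascPochhammer ℝ m).eval b * (c + m) * (c - b) * (ascPochhammer ℝ m).eval c * R1

theorem lowering_operator_on_Phi (s : ℝ) (hs : 1/2 < s) (hs1 : s < 1) (n k : ℤ) (hnk : k ≤ n)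
    (r : ℝ) (hr : 0 < r) (hr1 : r < 1) :
    -(n : ℝ) * ((1 - r ^ 2) / r) * Phi s n k r + (1 - r ^ 2) * deriv (Phi s n k) r +
      (k : ℝ) * ((1 + r ^ 2) / r) * Phi s n k r
      = -2 * ((s - (k : ℝ)) * (1 - s - (k : ℝ)) / (1 + (n : ℝ) - (k : ℝ))) *
          Phi s n (k - 1) r := by
  have h12 : (0:ℝ) < 1 - r ^ 2 := by nlinarith
  have hr0 : r ≠ 0 := hr.ne'
  set N : ℕ := (n - k).natAbs with hNdef
  have hNZ : ((n - k).natAbs : ℤ) = n - k := Int.natAbs_of_nonneg (by omega)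
  have hNZ' : (N : ℤ) = n - k := by rw [hNdef]; exact hNZ
  have hNcast : (N : ℝ) = (n : ℝ) - k := by
    have h := congrArg (fun z : ℤ => (z : ℝ)) hNZ'
    push_cast at h
    exact h
  set a : ℝ := s - (k : ℝ) with hadef
  set b : ℝ := s + (n : ℝ) with hbdef
  set c : ℝ := 1 + (N : ℝ) with hcdef
  have ha : ∀ j : ℕ, a + j ≠ 0 := by
    intro j h
    exact nonint s hs hs1 ((j : ℤ) - k) (by push_cast; rw [hadef] at h; linarith)
  have hb : ∀ j : ℕ, b + j ≠ 0 := by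
    intro j h
    exact nonint s hs hs1 (n + j) (by push_cast; rw [hbdef] at h; linarith)
  have hc : ∀ j : ℕ, c + j ≠ 0 := by
    intro j
    rw [hcdef]
    positivity
  have heps1 : eps n k = 1 := if_pos hnk
  have heps2 : eps n (k - 1) = 1 := if_pos (by omega)
  have hx1 : |r ^ 2| < 1 := by
    rw [abs_of_pos (by positivity)]
    nlinarith
  have hPhik : Phi s n k = fun t : ℝ => (1 - t ^ 2) ^ s * (t ^ N * hyperF a b c (t ^ 2)) := by
    funext t
    rw [Phi, heps1, one_mul, one_mul, ← hNdef, mul_assoc]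
  have hN1 : (n - (k - 1)).natAbs = N + 1 := by rw [hNdef]; omega
  have hPhik' : Phi s n (k - 1) r
      = (1 - r ^ 2) ^ s * (r ^ (N + 1) * hyperF (a + 1) b (c + 1) (r ^ 2)) := by
    rw [Phi, heps2, one_mul, one_mul, hN1, mul_assoc]
    have e1 : s - ((k : ℤ) - 1 : ℤ) = a + 1 := by rw [hadef]; push_cast; ring
    have e2 : (1 : ℝ) + ((N : ℕ) + 1 : ℕ) = c + 1 := by rw [hcdef]; push_cast; ring
    rw [e1, e2]
  set G : ℝ := hyperF a b c (r ^ 2) with hGdef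
  set H : ℝ := hyperF (a + 1) b (c + 1) (r ^ 2) with hHdef
  set G' : ℝ := ∑' m : ℕ, ((m : ℝ) + 1) * coeffA a b c (m + 1) * (r ^ 2) ^ m with hG'def
  -- derivative
  have hF : HasDerivAt (hyperF a b c) G' (r ^ 2) := hasDerivAt_F a b c ha hb hc (r ^ 2) hx1
  have hsq : HasDerivAt (fun t : ℝ => t ^ 2) (2 * r) r := by simpa using hasDerivAt_pow 2 r
  have hcomp : HasDerivAt (fun t : ℝ => hyperF a b c (t ^ 2)) (G' * (2 * r)) r := by
    have h := HasDerivAt.comp (h₂ := hyperF a b c) (h := fun t : ℝ => t ^ 2) r hF hsq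
    exact h
  have hprod := (hasDerivAt_pow N r).mul hcomp
  have g1 : HasDerivAt (fun t : ℝ => 1 - t ^ 2) (0 - 2 * r) r := (hasDerivAt_const r 1).sub hsq
  have h1s := g1.rpow_const (p := s) (Or.inl h12.ne')
  have hPhiD := h1s.mul hprod
  simp only [Pi.mul_def] at hPhiD
  rw [← hPhik] at hPhiD
  have hderiv := hPhiD.deriv
  -- summability facts
  have SA : ∀ d e : ℝ, Summable (fun m : ℕ => (d + e * m) * coeffA a b c m * (r ^ 2) ^ m) :=
    fun d e => summable_W a b c ha hb hc (r ^ 2) hx1 d e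
  have S2 : Summable (fun m : ℕ => ((m : ℝ) + 1) * coeffA a b c (m + 1) * (r ^ 2) ^ m) :=
    summable_shift a b c ha hb hc (r ^ 2) hx1 (by positivity)
  have SmA : Summable (fun m : ℕ => (m : ℝ) * coeffA a b c m * (r ^ 2) ^ m) :=
    (SA 0 1).congr fun m => by ring
  have Ssub : Summable (fun m : ℕ => ((k : ℝ) - s) * (coeffA a b c m * (r ^ 2) ^ m)) :=
    (SA (k - s) 0).congr fun m => by ring
  have hsum1 : Summable (fun m : ℕ => (-(a + m)) * coeffA a b c m * (r ^ 2) ^ m) :=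
    (SA (-a) (-1)).congr fun m => by ring
  have hxG' : ∑' m : ℕ, (m : ℝ) * coeffA a b c m * (r ^ 2) ^ m = r ^ 2 * G' := by
    rw [SmA.tsum_eq_zero_add]
    rw [hG'def, ← tsum_mul_left]
    norm_num
    exact tsum_congr fun m => by push_cast; ring
  have e1 : ∑' m : ℕ, (-(a + m)) * coeffA a b c m * (r ^ 2) ^ m
      = ((k : ℝ) - s) * G - r ^ 2 * G' := by
    rw [← hxG', hGdef, hyperF_eq, ← tsum_mul_left, ← Ssub.tsum_sub SmA]
    exact tsum_congr fun m => by
      linear_combination (-(coeffA a b c m * (r ^ 2) ^ m)) * hadef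
  have key : ((k : ℝ) - s) * G + (1 - r ^ 2) * G'
      = -(a * (c - b) / c) * H := by
    have t2 : ((k : ℝ) - s) * G + (1 - r ^ 2) * G'
        = ∑' m : ℕ, ((-(a + m)) * coeffA a b c m * (r ^ 2) ^ m
            + ((m : ℝ) + 1) * coeffA a b c (m + 1) * (r ^ 2) ^ m) := by
      rw [hsum1.tsum_add S2, e1]
      ring
    rw [t2]
    have t3 : ∀ m : ℕ, (-(a + m)) * coeffA a b c m * (r ^ 2) ^ m
        + ((m : ℝ) + 1) * coeffA a b c (m + 1) * (r ^ 2) ^ m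
        = -(a * (c - b) / c) * (coeffA (a + 1) b (c + 1) m * (r ^ 2) ^ m) := fun m => by
      linear_combination ((r ^ 2) ^ m) * starPoch a b c hc m
    rw [tsum_congr t3, tsum_mul_left, hHdef, hyperF_eq]
  -- final assembly
  have hXX : (1 - r ^ 2) ^ (s - 1) = (1 - r ^ 2) ^ s / (1 - r ^ 2) := by
    rw [Real.rpow_sub h12, Real.rpow_one]
  have hNr : (N : ℝ) * r ^ (N - 1) * r = (N : ℝ) * r ^ N := by
    cases N with
    | zero => simp
    | succ j => rw [Nat.succ_sub_one, pow_succ]; ring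
  have hden : (1 : ℝ) + (n : ℝ) - k ≠ 0 := by
    have : (0 : ℝ) ≤ (n : ℝ) - k := by
      rw [← hNcast]; positivity
    intro h; linarith
  have hconst : -(a * (c - b) / c) = -((s - (k:ℝ)) * (1 - s - (k:ℝ)) / (1 + (n:ℝ) - (k:ℝ))) := by
    rw [hadef, hbdef, hcdef, hNcast]
    rw [show (1:ℝ) + ((n:ℝ) - (k:ℝ)) = 1 + (n:ℝ) - (k:ℝ) from by ring]
    ring
  rw [hconst] at key
  have hPhikr : Phi s n k r = (1 - r ^ 2) ^ s * (r ^ N * G) := by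
    rw [hPhik, hGdef]
  rw [hderiv, hPhik', hPhikr, hXX, ← hGdef]
  rw [show -2 * ((s - (k:ℝ)) * (1 - s - (k:ℝ)) / (1 + (n:ℝ) - (k:ℝ)))
        * ((1 - r ^ 2) ^ s * (r ^ (N + 1) * H))
      = 2 * ((1 - r ^ 2) ^ s * r ^ (N + 1))
        * (-((s - (k:ℝ)) * (1 - s - (k:ℝ)) / (1 + (n:ℝ) - (k:ℝ))) * H) by ring, ← key]
  field_simp
  linear_combination (G * (1 - r ^ 2)) * hNr
    + (G * (1 - r ^ 2) * r ^ N) * hNcast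
end

section
/- Let s ∈ ℝ with 1/2 < s < 1 and let n, k ∈ ℤ, with ε = 1 if n ≥ k and ε = −1 otherwise. Then lim_{t → ∞} e^{(1 − s)·t} · Φ_{2n,2k}(tanh(t/2)) = 4^{1−s} · Γ(1 + |n − k|)·Γ(2s − 1)/(Γ(s − ε·k)·Γ(s + ε·n)), where Γ is the Gamma function. -/
set_option maxHeartbeats 1000000
open Filter Real Finset Topology

namespace PhiAux

noncomputable def P (a : ℝ) (m : ℕ) : ℝ := (ascPochhammer ℝ m).eval a

lemma P_succ (a : ℝ) (m : ℕ) : P a (m+1) = P a m * (a + m) := ascPochhammer_succ_eval m a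

lemma P_zero (a : ℝ) : P a 0 = 1 := by simp [P]

lemma P_pos {a : ℝ} (ha : 0 < a) (m : ℕ) : 0 < P a m := ascPochhammer_pos m a ha

/-- `a` is not a nonpositive integer. -/
def NNPI (a : ℝ) : Prop := ∀ m : ℕ, a ≠ -(m:ℝ)

lemma NNPI.of_pos {a : ℝ} (ha : 0 < a) : NNPI a := by
  intro m h
  have : (0:ℝ) ≤ m := Nat.cast_nonneg m
  linarith

lemma NNPI.add_ne {a : ℝ} (ha : NNPI a) (m : ℕ) : a + m ≠ 0 := by
  intro h; exact ha m (by linarith)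

lemma P_ne_zero {a : ℝ} (ha : NNPI a) (m : ℕ) : P a m ≠ 0 := by
  simp only [P, ne_eq, ascPochhammer_eval_eq_zero_iff]
  rintro ⟨j, hj, hja⟩
  exact ha j (by linarith)

lemma tendsto_nat_div_add (a : ℝ) : Tendsto (fun m : ℕ => (m:ℝ) / (a + m)) atTop (𝓝 1) := by
  have h0 : Tendsto (fun m : ℕ => a / (m:ℝ)) atTop (𝓝 0) := tendsto_const_div_atTop_nhds_zero_nat a
  have h1 : Tendsto (fun m : ℕ => (a / (m:ℝ) + 1)⁻¹) atTop (𝓝 1) := by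
    simpa using (h0.add_const 1).inv₀ (by norm_num)
  apply h1.congr'
  filter_upwards [eventually_gt_atTop 0] with m hm
  have hm0 : (m:ℝ) ≠ 0 := Nat.cast_ne_zero.2 hm.ne'
  rcases eq_or_ne (a + (m:ℝ)) 0 with h | h
  · rw [h]; rw [show a = -(m:ℝ) by linarith]; field_simp; simp
  · field_simp

lemma P_eq_prod (a : ℝ) (m : ℕ) : P a m = ∏ i ∈ Finset.range m, (a + i) := by
  induction m with
  | zero => simp [P_zero]
  | succ i ih => rw [P_succ, ih, Finset.prod_range_succ]

/-- Euler-limit asymptotics: `(a)_m / (m^(a-1) m!) → Γ(a)⁻¹`. -/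
lemma tendsto_P_div {a : ℝ} (ha : NNPI a) :
    Tendsto (fun m : ℕ => P a m / ((m:ℝ) ^ (a-1) * (Nat.factorial m))) atTop (𝓝 (Real.Gamma a)⁻¹) := by
  have hG : Real.Gamma a ≠ 0 := Real.Gamma_ne_zero ha
  have hseq := (Real.GammaSeq_tendsto_Gamma a).inv₀ hG
  have hnd := tendsto_nat_div_add a
  have hmul := hseq.mul hnd
  rw [mul_one] at hmul
  apply hmul.congr'
  filter_upwards [eventually_gt_atTop 0] with m hm
  have hm0 : (0:ℝ) < (m:ℝ) := by exact_mod_cast hm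
  have hprod : ∏ j ∈ Finset.range (m + 1), (a + (j:ℝ)) = P a (m+1) := (P_eq_prod a (m+1)).symm
  have hfac : (0:ℝ) < (Nat.factorial m : ℝ) := by exact_mod_cast Nat.factorial_pos m
  have hrp : (m:ℝ) ^ a = (m:ℝ) ^ (a-1) * m := by
    rw [← Real.rpow_add_one hm0.ne' (a-1)]; ring_nf
  have hPm : P a m ≠ 0 := P_ne_zero ha m
  have ham : a + (m:ℝ) ≠ 0 := ha.add_ne m
  have hrpos : (0:ℝ) < (m:ℝ) ^ (a-1) := Real.rpow_pos_of_pos hm0 _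
  rw [Real.GammaSeq, hprod, P_succ, hrp]
  field_simp

/-- coefficients of the binomial series -/
noncomputable def vco (σ : ℝ) (m : ℕ) : ℝ := P σ m / (Nat.factorial m)

variable {σ : ℝ}

lemma vco_pos (hσ : 0 < σ) (m : ℕ) : 0 < vco σ m :=
  div_pos (P_pos hσ m) (by exact_mod_cast Nat.factorial_pos m)

lemma vco_zero : vco σ 0 = 1 := by simp [vco, P_zero]

lemma vco_succ (m : ℕ) : vco σ (m+1) = vco σ m * ((σ + m) / (m+1)) := by
  have h1 : (Nat.factorial (m+1) : ℝ) = (m+1) * Nat.factorial m := by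
    rw [Nat.factorial_succ]; push_cast; ring
  have h2 : (Nat.factorial m : ℝ) ≠ 0 := by exact_mod_cast (Nat.factorial_pos m).ne'
  rw [vco, P_succ, h1, vco, div_mul_div_comm]
  ring_nf

lemma vco_succ_mul (hσ : 0 < σ) (m : ℕ) : (m+1 : ℝ) * vco σ (m+1) = (σ + m) * vco σ m := by
  rw [vco_succ]
  have : (m:ℝ) + 1 ≠ 0 := by positivity
  field_simp

/-- ratio limit `(σ+m)/(m+1) → 1` -/
lemma tendsto_ratio (σ : ℝ) : Tendsto (fun m : ℕ => (σ + m) / ((m:ℝ)+1)) atTop (𝓝 1) := by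
  have h0 : Tendsto (fun m : ℕ => (σ - 1) / ((m:ℝ)+1)) atTop (𝓝 0) := by
    apply Tendsto.div_atTop tendsto_const_nhds
    exact tendsto_atTop_add_const_right _ 1 (tendsto_natCast_atTop_atTop)
  have := h0.add_const 1
  rw [zero_add] at this
  apply this.congr
  intro m
  have : ((m:ℝ)+1) ≠ 0 := by positivity
  field_simp
  ring

lemma summable_vco (hσ : 0 < σ) {x : ℝ} (hx : |x| < 1) :
    Summable (fun m => vco σ m * x ^ m) := by
  rcases eq_or_ne x 0 with rfl | hx0
  · apply summable_of_ne_finset_zero (s := {0})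
    intro m hm
    simp only [Finset.mem_singleton] at hm
    rw [zero_pow hm, mul_zero]
  · apply summable_of_ratio_test_tendsto_lt_one hx
    · exact Eventually.of_forall fun m => mul_ne_zero (vco_pos hσ m).ne' (pow_ne_zero m hx0)
    · have key := (tendsto_ratio σ).mul (tendsto_const_nhds (x := |x|))
      rw [one_mul] at key
      apply key.congr
      intro m
      rw [vco_succ]
      have h1 : 0 < vco σ m := vco_pos hσ m
      have h2 : (0:ℝ) < |x| ^ m := by positivity
      rw [norm_mul, norm_mul, norm_mul, Real.norm_eq_abs, Real.norm_eq_abs, Real.norm_eq_abs,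
        Real.norm_eq_abs, abs_of_pos h1, pow_succ, abs_mul]
      rw [abs_of_pos (div_pos (by positivity : (0:ℝ) < σ + m) (by positivity : (0:ℝ) < (m:ℝ)+1))]
      field_simp

/-- summable bound for derivatives -/
lemma summable_dco (hσ : 0 < σ) {ρ : ℝ} (hρ0 : 0 < ρ) (hρ : ρ < 1) :
    Summable (fun m : ℕ => vco σ m * (m * ρ ^ (m-1))) := by
  apply summable_of_ratio_test_tendsto_lt_one hρ
  · filter_upwards [eventually_gt_atTop 0] with m hm
    have h1 : 0 < vco σ m := vco_pos hσ m
    have : (0:ℝ) < m := by exact_mod_cast hm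
    positivity
  · have key : Tendsto (fun m : ℕ => ((σ + m) / ((m:ℝ)+1)) * (((m:ℝ)+1)/m) * ρ) atTop (𝓝 ρ) := by
      have h2 : Tendsto (fun m : ℕ => ((m:ℝ)+1)/m) atTop (𝓝 1) := by
        have h0 : Tendsto (fun m : ℕ => 1 / (m:ℝ)) atTop (𝓝 0) := tendsto_const_div_atTop_nhds_zero_nat 1
        have := h0.add_const 1
        rw [zero_add] at this
        apply this.congr'
        filter_upwards [eventually_gt_atTop 0] with m hm
        have : ((m:ℝ)) ≠ 0 := by positivity
        field_simp
        ring
      have := ((tendsto_ratio σ).mul h2).mul_const ρ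
      simpa using this
    apply key.congr'
    filter_upwards [eventually_gt_atTop 0] with m hm
    have hm0 : (0:ℝ) < m := by exact_mod_cast hm
    have h1 : 0 < vco σ m := vco_pos hσ m
    have h1' : 0 < vco σ (m+1) := vco_pos hσ (m+1)
    have h2 : 0 < ρ ^ (m-1) := by positivity
    have hms : m - 1 + 1 = m := Nat.succ_pred_eq_of_pos hm
    simp only [Nat.add_sub_cancel, Real.norm_eq_abs]
    have hfm : 0 < vco σ m * (↑m * ρ ^ (m-1)) := by positivity
    have hfm1 : 0 < vco σ (m+1) * (↑(m+1) * ρ ^ m) := by positivity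
    rw [abs_of_pos hfm1, abs_of_pos hfm, vco_succ]
    have hrm : ρ ^ m = ρ ^ (m-1) * ρ := by rw [← pow_succ, hms]
    rw [hrm]
    push_cast
    field_simp

lemma y_mul_pow (y : ℝ) (m : ℕ) : y * ((m:ℝ) * y ^ (m-1)) = (m:ℝ) * y ^ m := by
  cases m with
  | zero => simp
  | succ i => simp only [Nat.add_sub_cancel]; rw [pow_succ]; ring

lemma norm_dterm_le {σ : ℝ} (hσ : 0 < σ) {ρ z : ℝ} (hz : |z| ≤ ρ) (n : ℕ) :
    ‖vco σ n * ((n:ℝ) * z ^ (n-1))‖ ≤ vco σ n * ((n:ℝ) * ρ ^ (n-1)) := by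
  have h0ρ : 0 ≤ ρ := le_trans (abs_nonneg z) hz
  rw [Real.norm_eq_abs, abs_mul, abs_mul, abs_pow, abs_of_pos (vco_pos hσ n), Nat.abs_cast]
  have : |z| ^ (n-1) ≤ ρ ^ (n-1) := pow_le_pow_left₀ (abs_nonneg z) hz _
  have h1 : 0 < vco σ n := vco_pos hσ n
  have h2 : (0:ℝ) ≤ (n:ℝ) := Nat.cast_nonneg n
  apply mul_le_mul_of_nonneg_left _ h1.le
  exact mul_le_mul_of_nonneg_left this h2

lemma f_hasDerivAt {σ : ℝ} (hσ : 0 < σ) {y : ℝ} (hy : |y| < 1) :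
    HasDerivAt (fun x : ℝ => ∑' m, vco σ m * x ^ m)
      (∑' m, vco σ m * ((m:ℝ) * y ^ (m-1))) y := by
  set ρ := (1 + |y|)/2 with hρdef
  have hy0 : 0 ≤ |y| := abs_nonneg y
  have hρ0 : 0 < ρ := by rw [hρdef]; linarith
  have hρ1 : ρ < 1 := by rw [hρdef]; linarith
  have hyρ : |y| < ρ := by rw [hρdef]; linarith
  exact hasDerivAt_tsum_of_isPreconnected
    (g := fun n z => vco σ n * z ^ n) (g' := fun n z => vco σ n * ((n:ℝ) * z ^ (n-1)))
    (summable_dco hσ hρ0 hρ1) (isOpen_Ioo (a := -ρ) (b := ρ))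
    (convex_Ioo _ _).isPreconnected
    (fun n z _ => (hasDerivAt_pow n z).const_mul (vco σ n))
    (fun n z hz => norm_dterm_le hσ (le_of_lt (abs_lt.2 ⟨hz.1, hz.2⟩)) n)
    (by constructor <;> [linarith; linarith] : (0:ℝ) ∈ Set.Ioo (-ρ) ρ)
    (summable_vco hσ (by rw [abs_zero]; norm_num))
    (abs_lt.1 hyρ)

lemma summable_dterm {σ : ℝ} (hσ : 0 < σ) {y : ℝ} (hy : |y| < 1) :
    Summable (fun m => vco σ m * ((m:ℝ) * y ^ (m-1))) := by
  set ρ := (1 + |y|)/2 with hρdef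
  have hy0 : 0 ≤ |y| := abs_nonneg y
  have hρ0 : 0 < ρ := by rw [hρdef]; linarith
  have hρ1 : ρ < 1 := by rw [hρdef]; linarith
  have hyρ : |y| ≤ ρ := by rw [hρdef]; linarith
  exact (summable_dco hσ hρ0 hρ1).of_norm_bounded (fun n => norm_dterm_le hσ hyρ n)

lemma ode_eq {σ : ℝ} (hσ : 0 < σ) {y : ℝ} (hy : |y| < 1) :
    (1 - y) * (∑' m, vco σ m * ((m:ℝ) * y ^ (m-1))) = σ * ∑' m, vco σ m * y ^ m := by
  have S1 := summable_dterm hσ hy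
  have S0 := summable_vco hσ hy
  have step1 : (∑' m, vco σ m * ((m:ℝ) * y ^ (m-1)))
      = ∑' m, (σ * (vco σ m * y ^ m) + y * (vco σ m * ((m:ℝ) * y ^ (m-1)))) := by
    rw [S1.tsum_eq_zero_add]
    have h0 : vco σ 0 * ((0:ℕ) * y ^ (0-1) : ℝ) = 0 := by simp
    rw [show (vco σ 0 * ((0:ℕ) * y ^ (0-1) : ℝ)) = 0 by simp, zero_add]
    apply tsum_congr
    intro m
    have h1 : vco σ (m+1) * ((m+1:ℕ) * y ^ (m+1-1) : ℝ)
        = ((m+1:ℝ) * vco σ (m+1)) * y ^ m := by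
      simp only [Nat.add_sub_cancel]; push_cast; ring
    rw [h1, vco_succ_mul hσ]
    linear_combination (-(vco σ m)) * y_mul_pow y m
  have step2 : (∑' m, (σ * (vco σ m * y ^ m) + y * (vco σ m * ((m:ℝ) * y ^ (m-1)))))
      = σ * (∑' m, vco σ m * y ^ m) + y * (∑' m, vco σ m * ((m:ℝ) * y ^ (m-1))) := by
    rw [Summable.tsum_add (S0.mul_left σ) (S1.mul_left y), tsum_mul_left, tsum_mul_left]
  have := step1.trans step2
  linarith [this]

lemma tsum_vco_eq {σ : ℝ} (hσ : 0 < σ) {x : ℝ} (hx0 : 0 ≤ x) (hx1 : x < 1) :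
    ∑' m, vco σ m * x ^ m = (1 - x) ^ (-σ) := by
  set f : ℝ → ℝ := fun z => ∑' m, vco σ m * z ^ m with hf
  set G : ℝ → ℝ := fun z => (1 - z) ^ σ * f z with hG
  have key : ∀ z ∈ Set.Icc (0:ℝ) x, HasDerivAt G 0 z := by
    intro z hz
    have hz0 : 0 ≤ z := hz.1
    have hz1 : z < 1 := lt_of_le_of_lt hz.2 hx1
    have hza : |z| < 1 := abs_lt.2 ⟨by linarith, hz1⟩
    have h1z : (0:ℝ) < 1 - z := by linarith
    have hfd := f_hasDerivAt hσ hza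
    have hrd : HasDerivAt (fun w : ℝ => (1 - w) ^ σ) (σ * (1-z) ^ (σ-1) * (-1)) z := by
      have h1 : HasDerivAt (fun w : ℝ => 1 - w) (-1) z := (hasDerivAt_id z).const_sub 1
      exact (Real.hasDerivAt_rpow_const (Or.inl h1z.ne')).comp z h1
    have hmul := hrd.mul hfd
    have hode := ode_eq hσ hza
    have hpow : (1-z) ^ σ = (1-z) ^ (σ-1) * (1-z) := by
      rw [← Real.rpow_add_one h1z.ne']; norm_num
    have hzero : σ * (1-z) ^ (σ-1) * (-1) * (∑' m, vco σ m * z ^ m)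
        + (1-z) ^ σ * (∑' m, vco σ m * ((m:ℝ) * z ^ (m-1))) = 0 := by
      rw [hpow]
      linear_combination (1-z) ^ (σ-1) * hode
    rw [hG]
    rw [hzero] at hmul
    exact hmul
  have hcont : ContinuousOn G (Set.Icc 0 x) := fun z hz => ((key z hz).continuousAt).continuousWithinAt
  have hconst := constant_of_has_deriv_right_zero hcont
    (fun z hz => ((key z ⟨hz.1, hz.2.le⟩)).hasDerivWithinAt) x (Set.right_mem_Icc.2 hx0)
  have hf0 : f 0 = 1 := by
    show (∑' m, vco σ m * (0:ℝ) ^ m) = 1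
    rw [tsum_eq_single 0 (fun m hm => by simp [zero_pow hm])]
    simp [vco_zero]
  have hG0 : G 0 = 1 := by rw [hG]; simp [hf0]
  have h1x : (0:ℝ) < 1 - x := by linarith
  have hGx : (1 - x) ^ σ * f x = 1 := by
    calc (1 - x) ^ σ * f x = G x := rfl
    _ = G 0 := hconst
    _ = 1 := hG0
  have hpos : (0:ℝ) < (1-x) ^ σ := Real.rpow_pos_of_pos h1x σ
  rw [Real.rpow_neg h1x.le]
  field_simp at hGx ⊢
  linarith [hGx]

lemma tendsto_S_atTop {σ : ℝ} (hσ : 0 < σ) :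
    Tendsto (fun x : ℝ => ∑' m, vco σ m * x ^ m) (𝓝[<] (1:ℝ)) atTop := by
  have h1 : Tendsto (fun x : ℝ => 1 - x) (𝓝[<] (1:ℝ)) (𝓝[>] (0:ℝ)) := by
    rw [tendsto_nhdsWithin_iff]
    constructor
    · have : Tendsto (fun x : ℝ => 1 - x) (𝓝 (1:ℝ)) (𝓝 0) := by
        have h := (tendsto_const_nhds (x := (1:ℝ)) (f := 𝓝 (1:ℝ))).sub tendsto_id
        simpa using h
      exact this.mono_left nhdsWithin_le_nhds
    · filter_upwards [self_mem_nhdsWithin] with x hx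
      simp only [Set.mem_Iio] at hx
      exact Set.mem_Ioi.2 (by linarith)
  have h2 : Tendsto (fun z : ℝ => z ^ σ) (𝓝[>] (0:ℝ)) (𝓝[>] (0:ℝ)) := by
    rw [tendsto_nhdsWithin_iff]
    constructor
    · have : ContinuousAt (fun z : ℝ => z ^ σ) 0 := by
        apply Real.continuousAt_rpow_const 0 σ (Or.inr hσ.le)
      have := this.tendsto.mono_left (nhdsWithin_le_nhds (s := Set.Ioi (0:ℝ)))
      rwa [Real.zero_rpow hσ.ne'] at this
    · filter_upwards [self_mem_nhdsWithin] with z hz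
      exact Set.mem_Ioi.2 (Real.rpow_pos_of_pos hz σ)
  have h3 : Tendsto (fun x : ℝ => ((1 - x) ^ σ)⁻¹) (𝓝[<] (1:ℝ)) atTop :=
    Tendsto.inv_tendsto_nhdsGT_zero (h2.comp h1)
  apply h3.congr'
  filter_upwards [Ioo_mem_nhdsLT_of_mem (Set.mem_Ioc.2 ⟨(by norm_num : (0:ℝ) < 1), le_refl 1⟩)] with x hx
  obtain ⟨ha, hb⟩ := hx
  rw [tsum_vco_eq hσ ha.le hb, Real.rpow_neg (by linarith : (0:ℝ) ≤ 1 - x)]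

/-- Abelian comparison: if `u m / v m → L` with `v > 0` and the `v`-power series diverges
at `1⁻`, then the ratio of the power series tends to `L`. -/
lemma abelian {u v : ℕ → ℝ} (hv : ∀ m, 0 < v m) {L : ℝ}
    (hr : Tendsto (fun m => u m / v m) atTop (𝓝 L))
    (hvs : ∀ x : ℝ, 0 ≤ x → x < 1 → Summable (fun m => v m * x ^ m))
    (hdiv : Tendsto (fun x : ℝ => ∑' m, v m * x ^ m) (𝓝[<] (1:ℝ)) atTop) :
    Tendsto (fun x : ℝ => (∑' m, u m * x ^ m) / (∑' m, v m * x ^ m)) (𝓝[<] (1:ℝ)) (𝓝 L) := by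
  rw [Metric.tendsto_nhds]
  intro ε hε
  obtain ⟨M, hM⟩ := (Metric.tendsto_atTop.1 hr (ε/4) (by linarith))
  have hM' : ∀ m ≥ M, |u m - L * v m| ≤ (ε/4) * v m := by
    intro m hm
    have h1 := (hM m hm).le
    rw [Real.dist_eq, abs_sub_comm] at h1
    have h2 : |L - u m / v m| * v m ≤ (ε/4) * v m :=
      mul_le_mul_of_nonneg_right h1 (hv m).le
    calc |u m - L * v m| = |L - u m / v m| * v m := by
          rw [← abs_of_pos (hv m), ← abs_mul]
          rw [abs_of_pos (hv m)]
          rw [sub_mul, div_mul_cancel₀ _ (hv m).ne', abs_sub_comm]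
      _ ≤ (ε/4) * v m := h2
  set C : ℝ := ∑ i ∈ Finset.range M, |u i - L * v i| with hC
  have hC0 : 0 ≤ C := Finset.sum_nonneg fun i _ => abs_nonneg _
  filter_upwards [Ioo_mem_nhdsLT_of_mem (Set.mem_Ioc.2 ⟨(by norm_num : (0:ℝ) < 1), le_refl 1⟩),
    hdiv.eventually_ge_atTop (4*C/ε + 1)] with x hx hS
  obtain ⟨hx0, hx1⟩ := hx
  set S : ℝ := ∑' m, v m * x ^ m with hSdef
  set T : ℝ := ∑' m, u m * x ^ m with hTdef
  have sv : Summable (fun m => v m * x ^ m) := hvs x hx0.le hx1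
  have hxpow : ∀ m : ℕ, (0:ℝ) < x ^ m := fun m => pow_pos hx0 m
  have su : Summable (fun m => u m * x ^ m) := by
    apply Summable.of_norm_bounded_eventually_nat (g := fun m => (|L| + ε/4) * (v m * x ^ m))
      ((sv.mul_left _))
    filter_upwards [eventually_ge_atTop M] with m hm
    have h1 : |u m| ≤ (|L| + ε/4) * v m := by
      have := hM' m hm
      calc |u m| = |L * v m + (u m - L * v m)| := by ring_nf
        _ ≤ |L * v m| + |u m - L * v m| := abs_add_le _ _
        _ ≤ |L| * v m + (ε/4) * v m := by
            rw [abs_mul, abs_of_pos (hv m)]; linarith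
        _ = (|L| + ε/4) * v m := by ring
    rw [Real.norm_eq_abs, abs_mul, abs_pow, abs_of_pos hx0]
    calc |u m| * x ^ m ≤ ((|L| + ε/4) * v m) * x ^ m :=
          mul_le_mul_of_nonneg_right h1 (hxpow m).le
      _ = (|L| + ε/4) * (v m * x ^ m) := by ring
  have sw : Summable (fun m => |u m - L * v m| * x ^ m) := by
    apply Summable.of_norm_bounded_eventually_nat (g := fun m => (ε/4) * (v m * x ^ m))
      ((sv.mul_left _))
    filter_upwards [eventually_ge_atTop M] with m hm
    rw [Real.norm_eq_abs, abs_mul, abs_abs, abs_pow, abs_of_pos hx0]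
    calc |u m - L * v m| * x ^ m ≤ ((ε/4) * v m) * x ^ m :=
          mul_le_mul_of_nonneg_right (hM' m hm) (hxpow m).le
      _ = (ε/4) * (v m * x ^ m) := by ring
  have hS1 : (1:ℝ) ≤ S := by
    have h4 : 0 ≤ 4*C/ε := by positivity
    linarith
  have hSpos : (0:ℝ) < S := by linarith
  -- |T - L*S| ≤ C + (ε/4) * S
  have key : |T - L * S| ≤ C + (ε/4) * S := by
    have h1 : T - L * S = ∑' m, (u m - L * v m) * x ^ m := by
      rw [hTdef, hSdef, ← tsum_mul_left, ← Summable.tsum_sub su (sv.mul_left L)]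
      apply tsum_congr; intro m; ring
    have heq : (fun m : ℕ => ‖(u m - L * v m) * x ^ m‖) = fun m => |u m - L * v m| * x ^ m :=
      funext fun m => by rw [Real.norm_eq_abs, abs_mul, abs_pow, abs_of_pos hx0]
    have h2 : |∑' m, (u m - L * v m) * x ^ m| ≤ ∑' m, |u m - L * v m| * x ^ m := by
      have h := norm_tsum_le_tsum_norm (f := fun m => (u m - L * v m) * x ^ m)
        (by rw [heq]; exact sw)
      rw [heq, Real.norm_eq_abs] at h
      exact h
    have h3 : ∑' m, |u m - L * v m| * x ^ m
        = (∑ i ∈ Finset.range M, |u i - L * v i| * x ^ i)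
          + ∑' m, |u (m+M) - L * v (m+M)| * x ^ (m+M) := (Summable.sum_add_tsum_nat_add M sw).symm
    have hhead : (∑ i ∈ Finset.range M, |u i - L * v i| * x ^ i) ≤ C := by
      rw [hC]
      apply Finset.sum_le_sum
      intro i _
      exact mul_le_of_le_one_right (abs_nonneg _) (pow_le_one₀ hx0.le hx1.le)
    have sv' : Summable (fun m => v (m+M) * x ^ (m+M)) := (summable_nat_add_iff M).2 sv
    have sw' : Summable (fun m => |u (m+M) - L * v (m+M)| * x ^ (m+M)) :=
      (summable_nat_add_iff M).2 sw
    have htail : ∑' m, |u (m+M) - L * v (m+M)| * x ^ (m+M) ≤ (ε/4) * S := by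
      have t1 : ∑' m, |u (m+M) - L * v (m+M)| * x ^ (m+M)
          ≤ ∑' m, (ε/4) * (v (m+M) * x ^ (m+M)) := by
        apply Summable.tsum_le_tsum _ sw' ((sv'.mul_left (ε/4)))
        intro m
        have := hM' (m+M) (Nat.le_add_left M m)
        calc |u (m+M) - L * v (m+M)| * x ^ (m+M)
            ≤ ((ε/4) * v (m+M)) * x ^ (m+M) :=
              mul_le_mul_of_nonneg_right this (hxpow _).le
          _ = (ε/4) * (v (m+M) * x ^ (m+M)) := by ring
      have t2 : ∑' m, v (m+M) * x ^ (m+M) ≤ S := by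
        have hsplit : (∑ i ∈ Finset.range M, v i * x ^ i) + ∑' m, v (m+M) * x ^ (m+M) = S :=
          Summable.sum_add_tsum_nat_add M sv
        have hh : 0 ≤ ∑ i ∈ Finset.range M, v i * x ^ i :=
          Finset.sum_nonneg fun i _ => (mul_pos (hv i) (hxpow i)).le
        linarith
      calc ∑' m, |u (m+M) - L * v (m+M)| * x ^ (m+M)
          ≤ ∑' m, (ε/4) * (v (m+M) * x ^ (m+M)) := t1
        _ = (ε/4) * ∑' m, v (m+M) * x ^ (m+M) := tsum_mul_left
        _ ≤ (ε/4) * S := mul_le_mul_of_nonneg_left t2 (by linarith)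
    rw [h1]
    calc |∑' m, (u m - L * v m) * x ^ m| ≤ ∑' m, |u m - L * v m| * x ^ m := h2
      _ = _ := h3
      _ ≤ C + (ε/4) * S := add_le_add hhead htail
  -- conclude
  rw [Real.dist_eq]
  have hfrac : T / S - L = (T - L * S) / S := by field_simp
  rw [hfrac, abs_div, abs_of_pos hSpos, div_lt_iff₀ hSpos]
  have hεS : ε * (4*C/ε + 1) ≤ ε * S := mul_le_mul_of_nonneg_left hS hε.le
  have hεS' : ε * (4*C/ε + 1) = 4*C + ε := by field_simp
  rw [hεS'] at hεS
  linarith [key]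
lemma tendsto_ratio_P {a b c σ : ℝ} (ha : NNPI a) (hb : NNPI b) (hc : NNPI c) (hσ : NNPI σ)
    (habcσ : a + b = c + σ) :
    Tendsto (fun m : ℕ => (P a m * P b m) / (P c m * P σ m)) atTop
      (𝓝 (Real.Gamma c * Real.Gamma σ / (Real.Gamma a * Real.Gamma b))) := by
  have hGa := Real.Gamma_ne_zero ha
  have hGb := Real.Gamma_ne_zero hb
  have hGc := Real.Gamma_ne_zero hc
  have hGσ := Real.Gamma_ne_zero hσ
  have hnum := (tendsto_P_div ha).mul (tendsto_P_div hb)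
  have hden := (tendsto_P_div hc).mul (tendsto_P_div hσ)
  have hden0 : (Real.Gamma c)⁻¹ * (Real.Gamma σ)⁻¹ ≠ 0 :=
    mul_ne_zero (inv_ne_zero hGc) (inv_ne_zero hGσ)
  have hdivt := hnum.div hden hden0
  have hval : (Real.Gamma a)⁻¹ * (Real.Gamma b)⁻¹ / ((Real.Gamma c)⁻¹ * (Real.Gamma σ)⁻¹)
      = Real.Gamma c * Real.Gamma σ / (Real.Gamma a * Real.Gamma b) := by
    field_simp
  rw [hval] at hdivt
  apply hdivt.congr'
  filter_upwards [eventually_gt_atTop 0] with m hm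
  have hm0 : (0:ℝ) < (m:ℝ) := by exact_mod_cast hm
  have hF : ((Nat.factorial m : ℝ)) ≠ 0 := by exact_mod_cast (Nat.factorial_pos m).ne'
  have hXa : (0:ℝ) < (m:ℝ) ^ (a-1) := Real.rpow_pos_of_pos hm0 _
  have hXb : (0:ℝ) < (m:ℝ) ^ (b-1) := Real.rpow_pos_of_pos hm0 _
  have hXc : (0:ℝ) < (m:ℝ) ^ (c-1) := Real.rpow_pos_of_pos hm0 _
  have hXσ : (0:ℝ) < (m:ℝ) ^ (σ-1) := Real.rpow_pos_of_pos hm0 _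
  have hpow : (m:ℝ) ^ (a-1) * (m:ℝ) ^ (b-1) = (m:ℝ) ^ (c-1) * (m:ℝ) ^ (σ-1) := by
    rw [← Real.rpow_add hm0, ← Real.rpow_add hm0]
    congr 1
    linarith
  have hPa := P_ne_zero ha m
  have hPb := P_ne_zero hb m
  have hPc := P_ne_zero hc m
  have hPσ := P_ne_zero hσ m
  simp only [Pi.div_apply]
  field_simp
  linear_combination (-1 : ℝ) * hpow

/-- The central limit: `(1-x)^σ F(a,b;c;x) → Γ(c)Γ(σ)/(Γ(a)Γ(b))` as `x → 1⁻`,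
where `σ = a + b - c`. -/
lemma tendsto_g {a b c σ : ℝ} (ha : NNPI a) (hb : NNPI b) (hc : NNPI c) (hσ : 0 < σ)
    (habcσ : a + b = c + σ) :
    Tendsto (fun x : ℝ => (1 - x) ^ σ *
        ∑' m, (P a m * P b m / (P c m * (Nat.factorial m))) * x ^ m)
      (𝓝[<] (1:ℝ)) (𝓝 (Real.Gamma c * Real.Gamma σ / (Real.Gamma a * Real.Gamma b))) := by
  set u : ℕ → ℝ := fun m => P a m * P b m / (P c m * (Nat.factorial m)) with hu
  have hr : Tendsto (fun m => u m / vco σ m) atTop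
      (𝓝 (Real.Gamma c * Real.Gamma σ / (Real.Gamma a * Real.Gamma b))) := by
    apply (tendsto_ratio_P ha hb hc (NNPI.of_pos hσ) habcσ).congr
    intro m
    have hF : ((Nat.factorial m : ℝ)) ≠ 0 := by exact_mod_cast (Nat.factorial_pos m).ne'
    have hPc := P_ne_zero hc m
    have hPσ := P_ne_zero (NNPI.of_pos hσ) m
    rw [hu, vco]
    field_simp
  have habel := abelian (vco_pos hσ) hr (fun x hx0 hx1 => summable_vco hσ (by rwa [abs_of_nonneg hx0]))
    (tendsto_S_atTop hσ)
  apply habel.congr'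
  filter_upwards [Ioo_mem_nhdsLT_of_mem (Set.mem_Ioc.2 ⟨(by norm_num : (0:ℝ) < 1), le_refl 1⟩)] with x hx
  obtain ⟨hx0, hx1⟩ := hx
  have h1x : (0:ℝ) < 1 - x := by linarith
  rw [tsum_vco_eq hσ hx0.le hx1, Real.rpow_neg h1x.le, div_inv_eq_mul]
  exact mul_comm _ _

lemma int_cast_not_between {z : ℤ} (h1 : 1/2 < (z:ℝ)) (h2 : (z:ℝ) < 1) : False := by
  rcases le_or_gt z 0 with h | h
  · have : (z:ℝ) ≤ 0 := by exact_mod_cast h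
    linarith
  · have : (1:ℝ) ≤ (z:ℝ) := by exact_mod_cast h
    linarith

lemma NNPI_of_s {s : ℝ} (hs : 1/2 < s) (hs1 : s < 1) (j : ℤ) : NNPI (s + j) := by
  intro m h
  have hz : s = ((-(m:ℤ) - j : ℤ) : ℝ) := by push_cast; linarith
  exact int_cast_not_between (by rw [← hz]; exact hs) (by rw [← hz]; exact hs1)

lemma tanh_half_eq (t : ℝ) :
    Real.tanh (t/2) = (1 - Real.exp (-t)) / (1 + Real.exp (-t)) := by
  have hA : (0:ℝ) < Real.exp (t/2) := Real.exp_pos _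
  have h1 : Real.exp (-(t/2)) = (Real.exp (t/2))⁻¹ := Real.exp_neg _
  have h2 : Real.exp (-t) = (Real.exp (t/2) * Real.exp (t/2))⁻¹ := by
    rw [← Real.exp_add, ← Real.exp_neg]
    congr 1
    ring
  rw [Real.tanh_eq_sinh_div_cosh, Real.sinh_eq, Real.cosh_eq, h1, h2]
  have h3 : Real.exp (t/2) * Real.exp (t/2) ≠ 0 := by positivity
  field_simp

lemma tanh_half_sq_lt_one (t : ℝ) : Real.tanh (t/2) ^ 2 < 1 := by
  have he : (0:ℝ) < Real.exp (-t) := Real.exp_pos _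
  have habs : |Real.tanh (t/2)| < 1 := by
    rw [tanh_half_eq, abs_div, abs_of_pos (by linarith : (0:ℝ) < 1 + Real.exp (-t))]
    rw [div_lt_one (by linarith)]
    rw [abs_lt]
    constructor <;> linarith
  calc Real.tanh (t/2) ^ 2 = |Real.tanh (t/2)| ^ 2 := (sq_abs _).symm
    _ < 1 := by nlinarith [habs, abs_nonneg (Real.tanh (t/2))]

lemma exp_mul_one_sub_tanh_sq (t : ℝ) :
    Real.exp t * (1 - Real.tanh (t/2) ^ 2) = 4 / (1 + Real.exp (-t)) ^ 2 := by
  have he : (0:ℝ) < Real.exp (-t) := Real.exp_pos _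
  have het : Real.exp t * Real.exp (-t) = 1 := by rw [← Real.exp_add]; simp
  rw [tanh_half_eq]
  have hd : (1 + Real.exp (-t)) ≠ 0 := by linarith
  field_simp
  ring_nf
  nlinarith [het]

end PhiAux

open PhiAux

theorem Phi_asymptotics_at_infinity (s : ℝ) (hs : 1/2 < s) (hs1 : s < 1) (n k : ℤ) :
    Filter.Tendsto
      (fun t : ℝ => Real.exp ((1 - s) * t) * Phi s n k (Real.tanh (t / 2)))
      Filter.atTop
      (nhds ((4 : ℝ) ^ (1 - s) * Real.Gamma (1 + ((n - k).natAbs : ℝ)) * Real.Gamma (2 * s - 1) /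
        (Real.Gamma (s - eps n k * (k : ℝ)) * Real.Gamma (s + eps n k * (n : ℝ))))) := by
  set N : ℕ := (n - k).natAbs with hN
  set a : ℝ := s - eps n k * k with ha'
  set b : ℝ := s + eps n k * n with hb'
  set c : ℝ := 1 + (N : ℝ) with hc'
  set σ : ℝ := 2 * s - 1 with hσ'
  have hσpos : 0 < σ := by rw [hσ']; linarith
  have hcpos : 0 < c := by rw [hc']; positivity
  have ha : NNPI a := by
    obtain ⟨j, hj⟩ : ∃ j : ℤ, eps n k * (k:ℝ) = (j:ℝ) := by
      unfold eps
      split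
      · exact ⟨k, by push_cast; ring⟩
      · exact ⟨-k, by push_cast; ring⟩
    have : a = s + ((-j : ℤ) : ℝ) := by rw [ha', hj]; push_cast; ring
    rw [this]; exact NNPI_of_s hs hs1 (-j)
  have hb : NNPI b := by
    obtain ⟨j, hj⟩ : ∃ j : ℤ, eps n k * (n:ℝ) = (j:ℝ) := by
      unfold eps
      split
      · exact ⟨n, by push_cast; ring⟩
      · exact ⟨-n, by push_cast; ring⟩
    have : b = s + (j : ℝ) := by rw [hb', hj]
    rw [this]; exact NNPI_of_s hs hs1 j
  have heps : eps n k * ((n:ℝ) - k) = (N : ℝ) := by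
    rw [hN]
    unfold eps
    split
    · next h =>
      have h4 : ((n-k).natAbs : ℝ) = (n:ℝ) - k := by
        rw [Nat.cast_natAbs]
        push_cast
        rw [abs_of_nonneg (by simp only [sub_nonneg, Int.cast_le]; exact_mod_cast h)]
      rw [h4]
      ring
    · next h =>
      have h4 : ((n-k).natAbs : ℝ) = (k:ℝ) - n := by
        rw [Nat.cast_natAbs]
        push_cast
        rw [abs_of_nonpos (by push_neg at h; simp only [sub_nonpos, Int.cast_le]; exact_mod_cast h.le)]
        ring
      rw [h4]
      ring
  have habcσ : a + b = c + σ := by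
    rw [ha', hb', hc', hσ', ← heps]
    ring
  -- the central limit for the hypergeometric factor
  have hg := tendsto_g ha hb (NNPI.of_pos hcpos) hσpos habcσ
  -- hyperF agrees with the series in hg
  have hhyper : ∀ y : ℝ, hyperF a b c y
      = ∑' m, (P a m * P b m / (P c m * (Nat.factorial m))) * y ^ m := fun y => rfl
  -- x(t) = tanh(t/2)^2 tends to 1 from below
  have he : Tendsto (fun t : ℝ => Real.exp (-t)) atTop (𝓝 0) :=
    Real.tendsto_exp_neg_atTop_nhds_zero
  have hr1 : Tendsto (fun t : ℝ => Real.tanh (t/2)) atTop (𝓝 1) := by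
    have := (tendsto_const_nhds (x := (1:ℝ)) (f := atTop (α := ℝ)) |>.sub he).div
      ((tendsto_const_nhds (x := (1:ℝ)) (f := atTop (α := ℝ))).add he) (by norm_num)
    simp only [sub_zero, add_zero, div_one] at this
    apply this.congr
    intro t
    exact (tanh_half_eq t).symm
  have hxlim : Tendsto (fun t : ℝ => Real.tanh (t/2) ^ 2) atTop (𝓝[<] (1:ℝ)) := by
    apply tendsto_nhdsWithin_of_tendsto_nhds_of_eventually_within
    · have := hr1.mul hr1
      rw [mul_one] at this
      apply this.congr
      intro t
      rw [sq]
    · exact Eventually.of_forall fun t => Set.mem_Iio.2 (tanh_half_sq_lt_one t)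
  -- T3
  have T3 : Tendsto (fun t : ℝ => (1 - Real.tanh (t/2) ^ 2) ^ σ
      * hyperF a b c (Real.tanh (t/2) ^ 2)) atTop
      (𝓝 (Real.Gamma c * Real.Gamma σ / (Real.Gamma a * Real.Gamma b))) := by
    have := hg.comp hxlim
    apply this.congr
    intro t
    simp only [Function.comp_apply, hhyper]
  -- T1
  have T1 : Tendsto (fun t : ℝ => (Real.exp t * (1 - Real.tanh (t/2) ^ 2)) ^ (1 - s))
      atTop (𝓝 ((4:ℝ) ^ (1 - s))) := by
    have h4 : Tendsto (fun t : ℝ => Real.exp t * (1 - Real.tanh (t/2) ^ 2)) atTop (𝓝 4) := by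
      have hden : Tendsto (fun t : ℝ => (1 + Real.exp (-t)) ^ 2) atTop (𝓝 1) := by
        have h1 := (tendsto_const_nhds (x := (1:ℝ)) (f := atTop (α := ℝ))).add he
        rw [add_zero] at h1
        have := h1.mul h1
        rw [mul_one] at this
        apply this.congr
        intro t; rw [sq]
      have := (tendsto_const_nhds (x := (4:ℝ)) (f := atTop (α := ℝ))).div hden (by norm_num)
      rw [div_one] at this
      apply this.congr
      intro t
      exact (exp_mul_one_sub_tanh_sq t).symm
    exact h4.rpow_const (Or.inl (by norm_num))
  -- T2
  have T2 : Tendsto (fun t : ℝ => Real.tanh (t/2) ^ N) atTop (𝓝 1) := by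
    have := hr1.pow N
    rwa [one_pow] at this
  -- combine
  have hfull := (T1.mul T2).mul T3
  rw [mul_one] at hfull
  have hval : (4:ℝ) ^ (1-s) * (Real.Gamma c * Real.Gamma σ / (Real.Gamma a * Real.Gamma b))
      = (4:ℝ) ^ (1-s) * Real.Gamma (1 + ((n - k).natAbs : ℝ)) * Real.Gamma (2*s-1) /
        (Real.Gamma (s - eps n k * (k:ℝ)) * Real.Gamma (s + eps n k * (n:ℝ))) := by
    rw [← ha', ← hb', ← hσ', hc', ← hN]
    ring
  rw [hval] at hfull
  apply hfull.congr'
  filter_upwards [eventually_gt_atTop 0] with t ht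
  have hX : (0:ℝ) < 1 - Real.tanh (t/2) ^ 2 := by linarith [tanh_half_sq_lt_one t]
  have hXs : (1 - Real.tanh (t/2) ^ 2) ^ (1-s) * (1 - Real.tanh (t/2) ^ 2) ^ σ
      = (1 - Real.tanh (t/2) ^ 2) ^ s := by
    rw [← Real.rpow_add hX]
    congr 1
    rw [hσ']; ring
  rw [Real.mul_rpow (Real.exp_pos t).le hX.le]
  rw [Phi]
  rw [show Real.exp ((1-s) * t) = Real.exp t ^ (1-s) by rw [mul_comm]; exact Real.exp_mul t (1-s)]
  rw [← hN, ← ha', ← hb']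
  have hgoal : Real.exp t ^ (1-s) * (1 - Real.tanh (t/2) ^ 2) ^ (1-s) * Real.tanh (t/2) ^ N *
      ((1 - Real.tanh (t/2) ^ 2) ^ σ * hyperF a b c (Real.tanh (t/2) ^ 2))
      = Real.exp t ^ (1-s) *
        (((1 - Real.tanh (t/2) ^ 2) ^ (1-s) * (1 - Real.tanh (t/2) ^ 2) ^ σ) *
          (Real.tanh (t/2) ^ N * hyperF a b c (Real.tanh (t/2) ^ 2))) := by ring
  rw [hgoal, hXs, hc']
  ring
end
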